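/- arXiv:2001.05344 — 6 statements merged into one kernel-verified Lean document; each statement's English description precedes it below -/
import Mathlib

section
/- Equivalence of formulations of the causal null (Proposition 1): Suppose in addition that the restriction of θ₀ to 𝒜₀ is continuous. Then the following are equivalent: (1) θ₀(a) = θ₀(a') for all a, a' ∈ 𝒜₀; (2) θ₀(a) = γ₀ for all a ∈ 𝒜₀; (3) Ω₀(a) = 0 for all a ∈ ℝ; (4) (∫ |Ω₀|^p dF₀)^{1/p} = 0 for every p ∈ [1, ∞) and sup_{a ∈ 𝒜₀} |Ω₀(a)| = 0. -/
open MeasureTheory Set Filter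

/-- Topological support of a Borel measure on ℝ. -/
def msupport (F₀ : Measure ℝ) : Set ℝ := {x : ℝ | ∀ U ∈ nhds x, F₀ U ≠ 0}

/-- Cumulative distribution function of `F₀`. -/
noncomputable def cdf0 (F₀ : Measure ℝ) (a : ℝ) : ℝ := (F₀ (Iic a)).toReal

/-- `γ₀ := ∫ θ₀ dF₀`. -/
noncomputable def gamma0 (F₀ : Measure ℝ) (θ₀ : ℝ → ℝ) : ℝ := ∫ u, θ₀ u ∂F₀

/-- `Γ₀(a) := ∫_{(-∞,a]} θ₀ dF₀`. -/
noncomputable def Gamma0 (F₀ : Measure ℝ) (θ₀ : ℝ → ℝ) (a : ℝ) : ℝ := ∫ u in Iic a, θ₀ u ∂F₀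

/-- `Ω₀(a) := Γ₀(a) − γ₀ F₀(a)`. -/
noncomputable def Omega0 (F₀ : Measure ℝ) (θ₀ : ℝ → ℝ) (a : ℝ) : ℝ :=
  Gamma0 F₀ θ₀ a - gamma0 F₀ θ₀ * cdf0 F₀ a

/-- The complement of the support is null. -/
lemma msupport_compl_null (F₀ : Measure ℝ) : F₀ (msupport F₀)ᶜ = 0 := by
  apply measure_null_of_locally_null
  intro x hx
  simp only [msupport, mem_compl_iff, mem_setOf_eq] at hx
  push_neg at hx
  obtain ⟨U, hU, hU0⟩ := hx
  exact ⟨U, nhdsWithin_le_nhds hU, hU0⟩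

/-- The support is closed. -/
lemma isClosed_msupport (F₀ : Measure ℝ) : IsClosed (msupport F₀) := by
  rw [← isOpen_compl_iff, isOpen_iff_mem_nhds]
  intro x hx
  simp only [msupport, mem_compl_iff, mem_setOf_eq] at hx
  push_neg at hx
  obtain ⟨U, hU, hU0⟩ := hx
  obtain ⟨V, hVU, hVo, hxV⟩ := mem_nhds_iff.mp hU
  refine mem_of_superset (hVo.mem_nhds hxV) fun y hy hy' => ?_
  exact hy' V (hVo.mem_nhds hy) (le_antisymm ((measure_mono hVU).trans hU0.le) zero_le)

/-- The support of a probability measure is nonempty. -/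
lemma msupport_nonempty (F₀ : Measure ℝ) [IsProbabilityMeasure F₀] :
    (msupport F₀).Nonempty := by
  by_contra h
  rw [not_nonempty_iff_eq_empty] at h
  have h0 := msupport_compl_null F₀
  rw [h, compl_empty] at h0
  simp [measure_univ] at h0

lemma integrable_of_abs_bound (F₀ : Measure ℝ) [IsProbabilityMeasure F₀]
    {θ₀ : ℝ → ℝ} (hθm : Measurable θ₀) {C : ℝ} (hθb : ∀ a, |θ₀ a| ≤ C) :
    Integrable θ₀ F₀ :=
  ⟨hθm.aestronglyMeasurable,
    HasFiniteIntegral.of_bounded (C := C) (ae_of_all _ fun a => by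
      simpa [Real.norm_eq_abs] using hθb a)⟩

lemma omega_eq_integral (F₀ : Measure ℝ) [IsProbabilityMeasure F₀]
    {θ₀ : ℝ → ℝ} (hθi : Integrable θ₀ F₀) (a : ℝ) :
    Omega0 F₀ θ₀ a = ∫ u in Iic a, (θ₀ u - gamma0 F₀ θ₀) ∂F₀ := by
  rw [integral_sub hθi.integrableOn (integrable_const _)]
  simp only [integral_const, smul_eq_mul, Measure.real, Measure.restrict_apply_univ]
  unfold Omega0 Gamma0 cdf0
  ring

/-- Key analytic lemma: if all integrals of `g` over half-open intervals vanish,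
`g` is continuous on the support, then `g` has no positive value on the support. -/
lemma no_pos (F₀ : Measure ℝ) [IsProbabilityMeasure F₀]
    {g : ℝ → ℝ} (hgi : Integrable g F₀) (hgc : ContinuousOn g (msupport F₀))
    (h0 : ∀ u v : ℝ, ∫ x in Ioc u v, g x ∂F₀ = 0)
    {a₀ : ℝ} (ha₀ : a₀ ∈ msupport F₀) : ¬ 0 < g a₀ := by
  intro hpos
  have hc : Filter.Tendsto g (nhdsWithin a₀ (msupport F₀)) (nhds (g a₀)) := hgc a₀ ha₀
  have hev : g ⁻¹' Ioi (g a₀ / 2) ∈ nhdsWithin a₀ (msupport F₀) :=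
    hc (Ioi_mem_nhds (half_lt_self hpos))
  obtain ⟨δ, hδ, hball⟩ := Metric.mem_nhdsWithin_iff.mp hev
  set s : Set ℝ := Ioc (a₀ - δ) (a₀ + δ / 2) with hs_def
  have hs_nhds : s ∈ nhds a₀ := Ioc_mem_nhds (by linarith) (by linarith)
  have hFs : F₀ s ≠ 0 := ha₀ s hs_nhds
  have hs_ball : s ⊆ Metric.ball a₀ δ := by
    intro x hx
    rw [Metric.mem_ball, Real.dist_eq, abs_lt]
    obtain ⟨h1, h2⟩ := hx
    constructor <;> linarith
  set t : Set ℝ := s ∩ msupport F₀ with ht_def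
  have hsd_null : F₀ (s \ msupport F₀) = 0 :=
    measure_mono_null (fun x hx => hx.2) (msupport_compl_null F₀)
  have hst : s =ᵐ[F₀] t := by
    rw [ae_eq_set]
    constructor
    · refine measure_mono_null ?_ hsd_null
      intro x hx
      exact ⟨hx.1, fun hs => hx.2 ⟨hx.1, hs⟩⟩
    · exact measure_mono_null (fun x hx => (hx.2 hx.1.1).elim) (measure_empty (μ := F₀))
  have hFt : F₀ t = F₀ s := (measure_congr hst).symm
  have hmt : MeasurableSet t := measurableSet_Ioc.inter (isClosed_msupport F₀).measurableSet
  have hge : ∀ x ∈ t, g a₀ / 2 ≤ g x := by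
    intro x hx
    exact le_of_lt (hball ⟨hs_ball hx.1, hx.2⟩)
  have hlb : g a₀ / 2 * (F₀ t).toReal ≤ ∫ x in t, g x ∂F₀ :=
    by have := setIntegral_ge_of_const_le_real hmt (measure_ne_top F₀ t) hge hgi.integrableOn
       simpa [Measure.real, smul_eq_mul, mul_comm] using this
  have hteq : ∫ x in t, g x ∂F₀ = 0 := by
    rw [← Measure.restrict_congr_set hst]
    exact h0 _ _
  have hpos' : 0 < (F₀ t).toReal := by
    rw [hFt]
    exact ENNReal.toReal_pos hFs (measure_ne_top F₀ s)
  nlinarith [hlb, hteq, hpos', half_pos hpos]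

/-- If `Ω₀` vanishes everywhere, then `θ₀ = γ₀` on the support. -/
lemma theta_eq_gamma (F₀ : Measure ℝ) [IsProbabilityMeasure F₀]
    {θ₀ : ℝ → ℝ} (hθm : Measurable θ₀) {C : ℝ} (hθb : ∀ a, |θ₀ a| ≤ C)
    (hθc : ContinuousOn θ₀ (msupport F₀))
    (h3 : ∀ a : ℝ, Omega0 F₀ θ₀ a = 0) :
    ∀ a ∈ msupport F₀, θ₀ a = gamma0 F₀ θ₀ := by
  set γ := gamma0 F₀ θ₀ with hγ
  set g : ℝ → ℝ := fun u => θ₀ u - γ with hg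
  have hθi : Integrable θ₀ F₀ := integrable_of_abs_bound F₀ hθm hθb
  have hgi : Integrable g F₀ := hθi.sub (integrable_const γ)
  have hIic : ∀ a : ℝ, ∫ x in Iic a, g x ∂F₀ = 0 := by
    intro a
    rw [← omega_eq_integral F₀ hθi a]
    exact h3 a
  have h0 : ∀ u v : ℝ, ∫ x in Ioc u v, g x ∂F₀ = 0 := by
    intro u v
    rcases le_or_gt u v with h | h
    · have hun : Iic u ∪ Ioc u v = Iic v := Iic_union_Ioc_eq_Iic h
      have hdis : Disjoint (Iic u) (Ioc u v) := Iic_disjoint_Ioc le_rfl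
      have := setIntegral_union hdis measurableSet_Ioc hgi.integrableOn hgi.integrableOn
        (f := g) (μ := F₀)
      rw [hun, hIic v, hIic u] at this
      linarith
    · rw [Ioc_eq_empty (not_lt.mpr h.le)]
      simp
  have hgc : ContinuousOn g (msupport F₀) := hθc.sub continuousOn_const
  intro a ha
  have h1 : ¬ 0 < g a := no_pos F₀ hgi hgc h0 ha
  have h2 : ¬ 0 < (-g) a := by
    refine no_pos F₀ hgi.neg hgc.neg (fun u v => ?_) ha
    have : ∫ x in Ioc u v, (-g) x ∂F₀ = -∫ x in Ioc u v, g x ∂F₀ := integral_neg g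
    rw [this, h0 u v, neg_zero]
  simp only [hg, Pi.neg_apply] at h1 h2
  push_neg at h1 h2
  have : θ₀ a - γ = 0 := le_antisymm h1 (by linarith)
  linarith

/-- If `Ω₀` vanishes on the support, it vanishes everywhere. -/
lemma omega_zero_of_supp (F₀ : Measure ℝ) [IsProbabilityMeasure F₀]
    (θ₀ : ℝ → ℝ) (hsupp : ∀ a ∈ msupport F₀, Omega0 F₀ θ₀ a = 0) :
    ∀ a : ℝ, Omega0 F₀ θ₀ a = 0 := by
  intro a
  by_cases hne : (msupport F₀ ∩ Iic a).Nonempty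
  · have hbdd : BddAbove (msupport F₀ ∩ Iic a) := ⟨a, fun x hx => hx.2⟩
    set b := sSup (msupport F₀ ∩ Iic a) with hb
    have hb_mem : b ∈ msupport F₀ ∩ Iic a :=
      ((isClosed_msupport F₀).inter isClosed_Iic).csSup_mem hne hbdd
    have hba : b ≤ a := hb_mem.2
    have hIoc_null : F₀ (Ioc b a) = 0 := by
      refine measure_mono_null ?_ (msupport_compl_null F₀)
      intro x hx hxs
      exact absurd (le_csSup hbdd ⟨hxs, hx.2⟩) (not_le.mpr hx.1)
    have hst : Iic a =ᵐ[F₀] Iic b := by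
      rw [ae_eq_set]
      constructor
      · rw [Iic_sdiff_Iic]
        exact hIoc_null
      · rw [Iic_sdiff_Iic, Ioc_eq_empty (not_lt.mpr hba)]
        simp
    have h1 : F₀.restrict (Iic a) = F₀.restrict (Iic b) := Measure.restrict_congr_set hst
    have h2 : F₀ (Iic a) = F₀ (Iic b) := measure_congr hst
    have : Omega0 F₀ θ₀ a = Omega0 F₀ θ₀ b := by
      unfold Omega0 Gamma0 cdf0
      rw [h1, h2]
    rw [this]
    exact hsupp b hb_mem.1
  · have hnull : F₀ (Iic a) = 0 := by
      refine measure_mono_null ?_ (msupport_compl_null F₀)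
      intro x hx hxs
      exact hne ⟨x, hxs, hx⟩
    unfold Omega0 Gamma0 cdf0
    rw [Measure.restrict_eq_zero.mpr hnull, hnull]
    simp

/-- Proposition 1: equivalence of the formulations of the causal null hypothesis. -/
theorem causal_null_equivalence
    (F₀ : Measure ℝ) [IsProbabilityMeasure F₀]
    (θ₀ : ℝ → ℝ) (hθm : Measurable θ₀) (hθb : ∃ C : ℝ, ∀ a : ℝ, |θ₀ a| ≤ C)
    (hθc : ContinuousOn θ₀ (msupport F₀)) :
    List.TFAE
      [ ∀ a ∈ msupport F₀, ∀ a' ∈ msupport F₀, θ₀ a = θ₀ a',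
        ∀ a ∈ msupport F₀, θ₀ a = gamma0 F₀ θ₀,
        ∀ a : ℝ, Omega0 F₀ θ₀ a = 0,
        (∀ p : ℝ, 1 ≤ p → (∫ a, |Omega0 F₀ θ₀ a| ^ p ∂F₀) ^ (1 / p) = 0) ∧
          (⨆ a ∈ msupport F₀, |Omega0 F₀ θ₀ a|) = 0 ] := by
  obtain ⟨C, hθb⟩ := hθb
  have hC0 : 0 ≤ C := (abs_nonneg _).trans (hθb 0)
  have hθi : Integrable θ₀ F₀ := integrable_of_abs_bound F₀ hθm hθb
  tfae_have 1 → 2 := by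
    intro h1 a ha
    obtain ⟨a₀, ha₀⟩ := msupport_nonempty F₀
    have hae : θ₀ =ᵐ[F₀] fun _ => θ₀ a₀ := by
      rw [Filter.EventuallyEq, ae_iff]
      refine measure_mono_null ?_ (msupport_compl_null F₀)
      intro x hx hxs
      exact hx (h1 x hxs a₀ ha₀)
    have hγ : gamma0 F₀ θ₀ = θ₀ a₀ := by
      rw [gamma0, integral_congr_ae hae]
      simp
    rw [hγ]
    exact h1 a ha a₀ ha₀
  tfae_have 2 → 3 := by
    intro h2 a
    have hae : θ₀ =ᵐ[F₀] fun _ => gamma0 F₀ θ₀ := by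
      rw [Filter.EventuallyEq, ae_iff]
      refine measure_mono_null ?_ (msupport_compl_null F₀)
      intro x hx hxs
      exact hx (h2 x hxs)
    have : Gamma0 F₀ θ₀ a = gamma0 F₀ θ₀ * cdf0 F₀ a := by
      rw [Gamma0, integral_congr_ae (ae_restrict_of_ae hae)]
      simp only [integral_const, smul_eq_mul, Measure.real, Measure.restrict_apply_univ]
      rw [cdf0]
      ring
    rw [Omega0, this, sub_self]
  tfae_have 3 → 2 := theta_eq_gamma F₀ hθm hθb hθc
  tfae_have 2 → 1 := fun h2 a ha a' ha' => (h2 a ha).trans (h2 a' ha').symm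
  tfae_have 3 → 4 := by
    intro h3
    constructor
    · intro p hp
      have hpne : p ≠ 0 := by linarith
      have hz : ∀ a : ℝ, |Omega0 F₀ θ₀ a| ^ p = 0 := by
        intro a
        rw [h3 a, abs_zero, Real.zero_rpow hpne]
      simp only [hz, integral_zero]
      rw [Real.zero_rpow (one_div_ne_zero hpne)]
    · simp only [h3, abs_zero]
      refine le_antisymm (Real.iSup_le (fun a => Real.iSup_le (fun _ => le_rfl) le_rfl) le_rfl) ?_
      exact Real.iSup_nonneg fun a => Real.iSup_nonneg fun _ => le_rfl
  tfae_have 4 → 3 := by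
    intro h4
    have hbound : ∀ a : ℝ, |Omega0 F₀ θ₀ a| ≤ 2 * C := by
      intro a
      have hΓ : |Gamma0 F₀ θ₀ a| ≤ C := by
        have := norm_integral_le_of_norm_le_const (μ := F₀.restrict (Iic a)) (f := θ₀) (C := C)
          (ae_of_all _ fun x => by simpa [Real.norm_eq_abs] using hθb x)
        rw [Real.norm_eq_abs] at this
        refine this.trans ?_
        rw [Measure.real, Measure.restrict_apply_univ]
        have h1 : (F₀ (Iic a)).toReal ≤ 1 := by
          rw [show (1 : ℝ) = (1 : ENNReal).toReal by simp]
          exact ENNReal.toReal_mono (by simp) prob_le_one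
        nlinarith
      have hγ : |gamma0 F₀ θ₀| ≤ C := by
        have := norm_integral_le_of_norm_le_const (μ := F₀) (f := θ₀) (C := C)
          (ae_of_all _ fun x => by simpa [Real.norm_eq_abs] using hθb x)
        rw [Real.norm_eq_abs] at this
        simpa [measure_univ, gamma0] using this
      have hcdf : 0 ≤ cdf0 F₀ a ∧ cdf0 F₀ a ≤ 1 := by
        constructor
        · exact ENNReal.toReal_nonneg
        · rw [cdf0, show (1 : ℝ) = (1 : ENNReal).toReal by simp]
          exact ENNReal.toReal_mono (by simp) prob_le_one
      rw [Omega0]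
      have h2 : |gamma0 F₀ θ₀ * cdf0 F₀ a| ≤ C := by
        rw [abs_mul, abs_of_nonneg hcdf.1]
        nlinarith [abs_nonneg (gamma0 F₀ θ₀)]
      calc |Gamma0 F₀ θ₀ a - gamma0 F₀ θ₀ * cdf0 F₀ a|
          ≤ |Gamma0 F₀ θ₀ a| + |gamma0 F₀ θ₀ * cdf0 F₀ a| := abs_sub _ _
        _ ≤ 2 * C := by linarith
    have hbdd : BddAbove (range fun a => ⨆ _ : a ∈ msupport F₀, |Omega0 F₀ θ₀ a|) := by
      refine ⟨2 * C, ?_⟩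
      rintro _ ⟨a, rfl⟩
      dsimp only
      by_cases h : a ∈ msupport F₀
      · rw [ciSup_pos h]
        exact hbound a
      · haveI : IsEmpty (a ∈ msupport F₀) := isEmpty_Prop.mpr h
        rw [Real.iSup_of_isEmpty]
        linarith
    have hsupp : ∀ a ∈ msupport F₀, Omega0 F₀ θ₀ a = 0 := by
      intro a ha
      have hle := le_ciSup hbdd a
      rw [ciSup_pos ha] at hle
      rw [h4.2] at hle
      exact abs_eq_zero.mp (le_antisymm hle (abs_nonneg _))
    exact omega_zero_of_supp F₀ θ₀ hsupp
  tfae_finish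
end

section
/- A vanishing primitive forces a flat dose-response curve (implication (3)⇒(2) of Proposition 1): Suppose in addition that the restriction of θ₀ to 𝒜₀ is continuous. If Ω₀(a) = 0 for every a ∈ ℝ, then θ₀(a) = γ₀ for every a ∈ 𝒜₀. -/
open MeasureTheory Set Filter

/-- A vanishing primitive forces a flat dose-response curve ((3) ⇒ (2) of Proposition 1). -/
theorem flat_of_primitive_vanishes
    (F₀ : Measure ℝ) [IsProbabilityMeasure F₀]
    (θ₀ : ℝ → ℝ) (hθm : Measurable θ₀) (hθb : ∃ C : ℝ, ∀ a : ℝ, |θ₀ a| ≤ C)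
    (hθc : ContinuousOn θ₀ (msupport F₀))
    (hΩ : ∀ a : ℝ, Omega0 F₀ θ₀ a = 0) :
    ∀ a ∈ msupport F₀, θ₀ a = gamma0 F₀ θ₀ := by
  obtain ⟨C, hC⟩ := hθb
  set γ := gamma0 F₀ θ₀ with hγ
  set g : ℝ → ℝ := fun x => θ₀ x - γ with hg
  have hgm : Measurable g := hθm.sub measurable_const
  have hθint : Integrable θ₀ F₀ :=
    (integrable_const C).mono' hθm.aestronglyMeasurable
      (Filter.Eventually.of_forall fun x => by
        simpa [Real.norm_eq_abs, abs_of_nonneg ((abs_nonneg (θ₀ 0)).trans (hC 0))] using hC x)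
  have hgint : Integrable g F₀ := hθint.sub (integrable_const γ)
  -- Step 1: the set integral of g over each Iic a vanishes
  have hIic : ∀ a : ℝ, ∫ x in Iic a, g x ∂F₀ = 0 := by
    intro a
    have h1 : ∫ x in Iic a, g x ∂F₀ =
        (∫ x in Iic a, θ₀ x ∂F₀) - ∫ x in Iic a, (γ : ℝ) ∂F₀ :=
      integral_sub hθint.integrableOn (integrable_const γ).integrableOn
    have h2 : ∫ x in Iic a, (γ : ℝ) ∂F₀ = (F₀ (Iic a)).toReal • γ := by
      simp [setIntegral_const]
      exact Or.inl rfl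
    have := hΩ a
    simp only [Omega0, Gamma0, cdf0] at this
    rw [h1, h2, smul_eq_mul]
    linarith [this]
  -- Step 2: g = 0 a.e.
  have hbound : ∀ x, |g x| ≤ C + |γ| := by
    intro x
    calc |g x| ≤ |θ₀ x| + |γ| := abs_sub _ _
    _ ≤ C + |γ| := by linarith [hC x]
  have hfin : ∀ h : ℝ → ℝ, (∀ x, |h x| ≤ C + |γ|) →
      ∫⁻ x, ENNReal.ofReal (h x) ∂F₀ ≠ ⊤ := by
    intro h hh
    have : ∫⁻ x, ENNReal.ofReal (h x) ∂F₀ ≤ ∫⁻ _, ENNReal.ofReal (C + |γ|) ∂F₀ := by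
      refine lintegral_mono fun x => ENNReal.ofReal_le_ofReal ?_
      exact le_trans (le_abs_self _) (hh x)
    refine ne_top_of_le_ne_top ?_ this
    simp [lintegral_const]
  have hfinp := hfin (fun x => g x) hbound
  have hfinn := hfin (fun x => -g x) (fun x => by simpa [abs_neg] using hbound x)
  set μp := F₀.withDensity (fun x => ENNReal.ofReal (g x)) with hμp
  set μn := F₀.withDensity (fun x => ENNReal.ofReal (-g x)) with hμn
  have : IsFiniteMeasure μp := isFiniteMeasure_withDensity hfinp
  have : IsFiniteMeasure μn := isFiniteMeasure_withDensity hfinn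
  have hmeq : μp = μn := by
    refine MeasureTheory.Measure.ext_of_Iic μp μn fun a => ?_
    rw [hμp, hμn, withDensity_apply _ measurableSet_Iic, withDensity_apply _ measurableSet_Iic]
    have hlp : ∫⁻ x in Iic a, ENNReal.ofReal (g x) ∂F₀ ≠ ⊤ :=
      ne_top_of_le_ne_top hfinp (setLIntegral_le_lintegral _ _)
    have hln : ∫⁻ x in Iic a, ENNReal.ofReal (-g x) ∂F₀ ≠ ⊤ :=
      ne_top_of_le_ne_top hfinn (setLIntegral_le_lintegral _ _)
    have key := integral_eq_lintegral_pos_part_sub_lintegral_neg_part hgint.integrableOn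
      (μ := F₀.restrict (Iic a))
    rw [hIic a] at key
    have htr : (∫⁻ x in Iic a, ENNReal.ofReal (g x) ∂F₀).toReal =
        (∫⁻ x in Iic a, ENNReal.ofReal (-g x) ∂F₀).toReal := by linarith [key]
    exact (ENNReal.toReal_eq_toReal_iff' hlp hln).1 htr
  have hae : ∀ᵐ x ∂F₀, g x = 0 := by
    have := (withDensity_eq_iff_of_sigmaFinite
      (hgm.ennreal_ofReal.aemeasurable) (hgm.neg.ennreal_ofReal.aemeasurable)).1 hmeq
    filter_upwards [this] with x hx
    rcases lt_trichotomy (g x) 0 with h | h | h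
    · exfalso
      rw [ENNReal.ofReal_eq_zero.2 h.le] at hx
      exact (ENNReal.ofReal_pos.2 (by show (0:ℝ) < -g x; linarith)).ne' hx.symm
    · exact h
    · exfalso
      rw [show ENNReal.ofReal ((-g) x) = 0 from ENNReal.ofReal_eq_zero.2 (by show -g x ≤ 0; linarith)] at hx
      exact (ENNReal.ofReal_pos.2 h).ne' hx
  -- Step 3: conclude on the support
  intro a ha
  by_contra hne
  have hga : g a ≠ 0 := fun h => hne (by simpa [hg, sub_eq_zero] using h)
  have hgapos : 0 < |g a| := abs_pos.2 hga
  have hcw : ContinuousWithinAt θ₀ (msupport F₀) a := hθc a ha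
  rw [Metric.continuousWithinAt_iff] at hcw
  obtain ⟨δ, hδ, hδc⟩ := hcw (|g a|) hgapos
  -- The bad set is null
  set E : Set ℝ := {x | g x ≠ 0} ∪ (msupport F₀)ᶜ with hE
  have hEnull : F₀ E = 0 := by
    refine measure_union_null ?_ (msupport_compl_null F₀)
    simpa [ae_iff] using hae
  have hball : F₀ (Metric.ball a δ) ≠ 0 := ha _ (Metric.ball_mem_nhds a hδ)
  have hnonempty : ¬ Metric.ball a δ ⊆ E := by
    intro hsub
    exact hball (measure_mono_null hsub hEnull)
  obtain ⟨x, hxball, hxE⟩ := not_subset.1 hnonempty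
  simp only [hE, mem_union, mem_setOf_eq, mem_compl_iff, not_or, not_not] at hxE
  obtain ⟨hgx, hxsupp⟩ := hxE
  have hdist := hδc hxsupp (by simpa [Real.dist_eq] using hxball)
  rw [Real.dist_eq] at hdist
  have : θ₀ x - θ₀ a = g x - g a := by simp [hg]
  rw [this, hgx, zero_sub, abs_neg] at hdist
  exact lt_irrefl _ hdist
end

section
/- Ω₀ vanishes on all of ℝ if and only if it vanishes on the support of F₀: Ω₀(a) = 0 for all a ∈ ℝ if and only if Ω₀(a) = 0 for all a ∈ 𝒜₀. -/
open MeasureTheory Set Filter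

/-- `Ω₀` vanishes on all of ℝ if and only if it vanishes on the support of `F₀`. -/
theorem primitive_vanishes_iff_vanishes_on_support
    (F₀ : Measure ℝ) [IsProbabilityMeasure F₀]
    (θ₀ : ℝ → ℝ) (hθm : Measurable θ₀) (hθb : ∃ C : ℝ, ∀ a : ℝ, |θ₀ a| ≤ C) :
    (∀ a : ℝ, Omega0 F₀ θ₀ a = 0) ↔ (∀ a ∈ msupport F₀, Omega0 F₀ θ₀ a = 0) := by
  constructor
  · exact fun h a _ => h a
  intro h a
  -- null outside support
  have hnull : ∀ s : Set ℝ, (∀ x ∈ s, x ∉ msupport F₀) → F₀ s = 0 := by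
    intro s hs
    apply measure_null_of_locally_null
    intro x hx
    have := hs x hx
    simp only [msupport, mem_setOf_eq, not_forall] at this
    obtain ⟨U, hU, hU0⟩ := this
    push_neg at hU0
    exact ⟨U, nhdsWithin_le_nhds hU, hU0⟩
  have hclosed : IsClosed (msupport F₀) := by
    rw [← isOpen_compl_iff, isOpen_iff_mem_nhds]
    intro x hx
    simp only [mem_compl_iff, msupport, mem_setOf_eq, not_forall] at hx
    obtain ⟨U, hU, hU0⟩ := hx
    push_neg at hU0
    obtain ⟨V, hVU, hVopen, hxV⟩ := mem_nhds_iff.mp hU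
    refine Filter.mem_of_superset (hVopen.mem_nhds hxV) ?_
    intro y hy
    simp only [mem_compl_iff, msupport, mem_setOf_eq, not_forall]
    exact ⟨U, Filter.mem_of_superset (hVopen.mem_nhds hy) hVU, by simp [hU0]⟩
  by_cases h0 : F₀ (Iic a) = 0
  · have hrest : F₀.restrict (Iic a) = 0 := Measure.restrict_eq_zero.mpr h0
    simp [Omega0, Gamma0, cdf0, gamma0, h0, hrest]
  · -- the set of support points ≤ a is nonempty
    have hne : (msupport F₀ ∩ Iic a).Nonempty := by
      by_contra hc
      rw [not_nonempty_iff_eq_empty] at hc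
      apply h0
      apply hnull
      intro x hx hxs
      exact (eq_empty_iff_forall_notMem.mp hc x) ⟨hxs, hx⟩
    set s := sSup (msupport F₀ ∩ Iic a) with hs
    have hbdd : BddAbove (msupport F₀ ∩ Iic a) :=
      ⟨a, fun x hx => hx.2⟩
    have hsa : s ≤ a := csSup_le hne (fun x hx => hx.2)
    have hsmem : s ∈ msupport F₀ := by
      have : s ∈ closure (msupport F₀ ∩ Iic a) := csSup_mem_closure hne hbdd
      exact (hclosed.closure_subset_iff.mpr inter_subset_left) this
    have hIoc : F₀ (Ioc s a) = 0 := by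
      apply hnull
      intro x hx hxs
      exact absurd (le_csSup hbdd ⟨hxs, hx.2⟩) (not_le.mpr hx.1)
    have hae : (Iic s : Set ℝ) =ᵐ[F₀] Iic a := by
      rw [Filter.eventuallyEq_set]
      have : ∀ᵐ x ∂F₀, x ∉ Ioc s a := by
        rw [ae_iff]; simpa [Ioc] using hIoc
      filter_upwards [this] with x hx
      simp only [mem_Iic, mem_Ioc, not_and, not_lt] at hx ⊢
      constructor
      · intro hxs; exact hxs.trans hsa
      · intro hxa
        by_contra hc
        exact absurd hxa (hx (not_le.mp hc))
    have hΓ : Gamma0 F₀ θ₀ a = Gamma0 F₀ θ₀ s :=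
      (setIntegral_congr_set hae).symm
    have hF : cdf0 F₀ a = cdf0 F₀ s := by
      unfold cdf0
      rw [measure_congr hae]
    have := h s hsmem
    unfold Omega0 at this ⊢
    rw [hΓ, hF]
    exact this
end

section
/- Second-order remainder identity for the influence-function construction: For every a₀ ∈ ℝ, every bounded measurable μ : ℝ × 𝒲 → ℝ, and every measurable g : ℝ × 𝒲 → ℝ with g ≥ K₁ > 0 everywhere, E[D_{a₀,μ,g}(Y, A, W)] = Ω₀(a₀) + ∬ [1{a ≤ a₀} − F₀(a₀)] · (μ(a,w) − μ₀(a,w)) · (1 − g₀(a,w)/g(a,w)) dF₀(a) dQ₀(w). -/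
open MeasureTheory Set Filter

section Aux

lemma integrable_of_ae_bdd {α : Type*} [MeasurableSpace α] {ν : Measure α} [IsFiniteMeasure ν]
    {f : α → ℝ} (hf : AEStronglyMeasurable f ν) {C : ℝ} (hC : ∀ᵐ x ∂ν, |f x| ≤ C) :
    Integrable f ν :=
  Integrable.mono' (integrable_const C) hf (by simpa [Real.norm_eq_abs] using hC)

lemma abs_mul_le {x y cx cy : ℝ} (hx : |x| ≤ cx) (hy : |y| ≤ cy) : |x * y| ≤ cx * cy := by
  rw [abs_mul]; exact mul_le_mul hx hy (abs_nonneg _) ((abs_nonneg x).trans hx)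

lemma abs_sub_le' {a b ca cb : ℝ} (ha : |a| ≤ ca) (hb : |b| ≤ cb) : |a - b| ≤ ca + cb := by
  rw [sub_eq_add_neg]
  refine (abs_add_le _ _).trans ?_
  rw [abs_neg]
  exact add_le_add ha hb

end Aux


/-- Indicator `1{a ≤ a₀}`. -/
noncomputable def indLe (a₀ a : ℝ) : ℝ := if a ≤ a₀ then 1 else 0

/-- `θ_μ(a) := ∫ μ(a,w) dQ₀(w)`. -/
noncomputable def thetaMu {𝒲 : Type*} [MeasurableSpace 𝒲] (Q₀ : Measure 𝒲)
    (μ : ℝ → 𝒲 → ℝ) (a : ℝ) : ℝ := ∫ w, μ a w ∂Q₀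

/-- `γ_μ := ∬ μ(a,w) dF₀(a) dQ₀(w)`. -/
noncomputable def gammaMu {𝒲 : Type*} [MeasurableSpace 𝒲] (F₀ : Measure ℝ) (Q₀ : Measure 𝒲)
    (μ : ℝ → 𝒲 → ℝ) : ℝ := ∫ a, ∫ w, μ a w ∂Q₀ ∂F₀

/-- `Ω_μ(a₀) := ∬ [1{a ≤ a₀} − F₀(a₀)] μ(a,w) dF₀(a) dQ₀(w)`. -/
noncomputable def OmegaMu {𝒲 : Type*} [MeasurableSpace 𝒲] (F₀ : Measure ℝ) (Q₀ : Measure 𝒲)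
    (μ : ℝ → 𝒲 → ℝ) (a₀ : ℝ) : ℝ :=
  ∫ a, ∫ w, (indLe a₀ a - cdf0 F₀ a₀) * μ a w ∂Q₀ ∂F₀

section Aux2

lemma indLe_eq_indicator (a₀ : ℝ) : indLe a₀ = Set.indicator (Iic a₀) (fun _ => (1:ℝ)) := by
  funext a; simp [indLe, Set.indicator_apply]

lemma hmeas_h (F₀ : Measure ℝ) (a₀ : ℝ) :
    Measurable fun a => indLe a₀ a - cdf0 F₀ a₀ := by
  apply Measurable.sub _ measurable_const
  rw [indLe_eq_indicator]
  exact measurable_const.indicator measurableSet_Iic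

lemma cdf0_nonneg (F₀ : Measure ℝ) (a₀ : ℝ) : 0 ≤ cdf0 F₀ a₀ := ENNReal.toReal_nonneg

lemma cdf0_le_one (F₀ : Measure ℝ) [IsProbabilityMeasure F₀] (a₀ : ℝ) : cdf0 F₀ a₀ ≤ 1 := by
  simpa [cdf0] using ENNReal.toReal_mono (by simp) (prob_le_one (μ := F₀) (s := Iic a₀))

lemma hbd_h (F₀ : Measure ℝ) [IsProbabilityMeasure F₀] (a₀ : ℝ) (a : ℝ) :
    |indLe a₀ a - cdf0 F₀ a₀| ≤ 1 := by
  have h0 := cdf0_nonneg F₀ a₀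
  have h1 := cdf0_le_one F₀ a₀
  rw [abs_le]; unfold indLe; split <;> constructor <;> linarith

lemma hint_h (F₀ : Measure ℝ) [IsProbabilityMeasure F₀] (a₀ : ℝ) :
    ∫ a, (indLe a₀ a - cdf0 F₀ a₀) ∂F₀ = 0 := by
  have hι : Integrable (indLe a₀) F₀ := by
    rw [indLe_eq_indicator]; exact (integrable_const 1).indicator measurableSet_Iic
  rw [integral_sub hι (integrable_const _), integral_const,
    indLe_eq_indicator, integral_indicator_const (1:ℝ) measurableSet_Iic]
  simp [cdf0, measureReal_def]

lemma abs_thetaMu_le {𝒲 : Type*} [MeasurableSpace 𝒲] (Q₀ : Measure 𝒲) [IsProbabilityMeasure Q₀]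
    (μ : ℝ → 𝒲 → ℝ) {C : ℝ} (hC : ∀ a w, |μ a w| ≤ C) (a : ℝ) : |thetaMu Q₀ μ a| ≤ C := by
  have := norm_integral_le_of_norm_le_const (μ := Q₀) (f := fun w => μ a w) (C := C)
    (Eventually.of_forall fun w => by simpa [Real.norm_eq_abs] using hC a w)
  simpa [thetaMu, Real.norm_eq_abs] using this

lemma abs_gammaMu_le {𝒲 : Type*} [MeasurableSpace 𝒲] (F₀ : Measure ℝ) [IsProbabilityMeasure F₀]
    (Q₀ : Measure 𝒲) [IsProbabilityMeasure Q₀] (μ : ℝ → 𝒲 → ℝ) {C : ℝ}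
    (hC : ∀ a w, |μ a w| ≤ C) : |gammaMu F₀ Q₀ μ| ≤ C := by
  have := norm_integral_le_of_norm_le_const (μ := F₀) (f := fun a => ∫ w, μ a w ∂Q₀) (C := C)
    (Eventually.of_forall fun a => by
      simpa [Real.norm_eq_abs, thetaMu] using abs_thetaMu_le Q₀ μ hC a)
  simpa [gammaMu, Real.norm_eq_abs] using this

lemma OmegaMu_prod {𝒲 : Type*} [MeasurableSpace 𝒲] (F₀ : Measure ℝ) [IsProbabilityMeasure F₀]
    (Q₀ : Measure 𝒲) [IsProbabilityMeasure Q₀] (μ : ℝ → 𝒲 → ℝ)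
    (hμm : Measurable (Function.uncurry μ)) {C : ℝ} (hC : ∀ a w, |μ a w| ≤ C) (a₀ : ℝ) :
    OmegaMu F₀ Q₀ μ a₀
      = ∫ q, (indLe a₀ q.1 - cdf0 F₀ a₀) * μ q.1 q.2 ∂(F₀.prod Q₀) := by
  have hint : Integrable (fun q : ℝ × 𝒲 => (indLe a₀ q.1 - cdf0 F₀ a₀) * μ q.1 q.2)
      (F₀.prod Q₀) := by
    refine integrable_of_ae_bdd
      (((hmeas_h F₀ a₀).comp measurable_fst).mul hμm).aestronglyMeasurable
      (C := 1 * C) (Eventually.of_forall fun q => ?_)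
    exact abs_mul_le (hbd_h F₀ a₀ q.1) (hC q.1 q.2)
  simp only [OmegaMu]
  exact integral_integral hint

lemma OmegaMu_theta {𝒲 : Type*} [MeasurableSpace 𝒲] (F₀ : Measure ℝ) (Q₀ : Measure 𝒲)
    (μ : ℝ → 𝒲 → ℝ) (a₀ : ℝ) :
    OmegaMu F₀ Q₀ μ a₀ = ∫ a, (indLe a₀ a - cdf0 F₀ a₀) * thetaMu Q₀ μ a ∂F₀ := by
  simp only [OmegaMu, thetaMu, integral_const_mul]

end Aux2


/-- The one-step functional `D_{a₀,μ,g}(y,a,w)`. -/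
noncomputable def Dfun {𝒲 : Type*} [MeasurableSpace 𝒲] (F₀ : Measure ℝ) (Q₀ : Measure 𝒲)
    (μ g : ℝ → 𝒲 → ℝ) (a₀ y a : ℝ) (w : 𝒲) : ℝ :=
  (indLe a₀ a - cdf0 F₀ a₀) * ((y - μ a w) / g a w + thetaMu Q₀ μ a - gammaMu F₀ Q₀ μ)
    + (∫ u, (indLe a₀ u - cdf0 F₀ a₀) * μ u w ∂F₀) - OmegaMu F₀ Q₀ μ a₀

/-- The efficient influence function `D*_{a₀}(y,a,w)`. -/
noncomputable def Dstar {𝒲 : Type*} [MeasurableSpace 𝒲] (F₀ : Measure ℝ) (Q₀ : Measure 𝒲)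
    (μ₀ g₀ : ℝ → 𝒲 → ℝ) (a₀ y a : ℝ) (w : 𝒲) : ℝ :=
  (indLe a₀ a - cdf0 F₀ a₀) *
      ((y - μ₀ a w) / g₀ a w + thetaMu Q₀ μ₀ a - gammaMu F₀ Q₀ μ₀)
    + (∫ u, (indLe a₀ u - cdf0 F₀ a₀) * μ₀ u w ∂F₀) - 2 * OmegaMu F₀ Q₀ μ₀ a₀

set_option maxHeartbeats 1000000 in
/-- Second-order remainder identity for the influence-function construction. -/
theorem second_order_remainder_identity
    {Ωs 𝒲 : Type*} [MeasurableSpace Ωs] [MeasurableSpace 𝒲]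
    (P : Measure Ωs) [IsProbabilityMeasure P]
    (Y A : Ωs → ℝ) (W : Ωs → 𝒲) (hY : Measurable Y) (hA : Measurable A) (hW : Measurable W)
    (hY2 : Integrable (fun ω => Y ω ^ 2) P)
    (F₀ : Measure ℝ) [IsProbabilityMeasure F₀] (Q₀ : Measure 𝒲) [IsProbabilityMeasure Q₀]
    (hAlaw : Measure.map A P = F₀) (hWlaw : Measure.map W P = Q₀)
    (K₀ K₁ K₂ : ℝ) (hK₀ : 0 ≤ K₀) (hK₁ : 0 < K₁) (hK₁₂ : K₁ ≤ K₂)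
    (g₀ : ℝ → 𝒲 → ℝ) (hg₀m : Measurable (Function.uncurry g₀))
    (hjoint : Measure.map (fun ω => (A ω, W ω)) P
      = (F₀.prod Q₀).withDensity (fun q => ENNReal.ofReal (g₀ q.1 q.2)))
    (hg₀bd : ∀ᵐ q ∂(F₀.prod Q₀), K₁ ≤ g₀ q.1 q.2 ∧ g₀ q.1 q.2 ≤ K₂)
    (μ₀ : ℝ → 𝒲 → ℝ) (hμ₀m : Measurable (Function.uncurry μ₀))
    (hμ₀bd : ∀ a w, |μ₀ a w| ≤ K₀)
    (hcond : MeasureTheory.condExp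
        (MeasurableSpace.comap (fun ω => (A ω, W ω)) inferInstance) P Y
      =ᵐ[P] fun ω => μ₀ (A ω) (W ω))
    (a₀ : ℝ) (μ : ℝ → 𝒲 → ℝ) (hμm : Measurable (Function.uncurry μ))
    (hμbd : ∃ C : ℝ, ∀ a w, |μ a w| ≤ C)
    (g : ℝ → 𝒲 → ℝ) (hgm : Measurable (Function.uncurry g))
    (hg : ∀ a w, K₁ ≤ g a w) :
    ∫ ω, Dfun F₀ Q₀ μ g a₀ (Y ω) (A ω) (W ω) ∂P
      = OmegaMu F₀ Q₀ μ₀ a₀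
        + ∫ a, ∫ w, (indLe a₀ a - cdf0 F₀ a₀) * (μ a w - μ₀ a w)
            * (1 - g₀ a w / g a w) ∂Q₀ ∂F₀ := by
  
  classical
  obtain ⟨C₀, hC₀⟩ := hμbd
  set C : ℝ := |C₀| with hCdef
  have hC : ∀ a w, |μ a w| ≤ C := fun a w => (hC₀ a w).trans (le_abs_self _)
  have hC0 : 0 ≤ C := abs_nonneg _
  have hhm := hmeas_h F₀ a₀
  have hhb := hbd_h F₀ a₀
  have hAW : Measurable fun ω => (A ω, W ω) := hA.prodMk hW
  have hgT : Measurable fun ω => g (A ω) (W ω) := hgm.comp hAW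
  have hμT : Measurable fun ω => μ (A ω) (W ω) := hμm.comp hAW
  have hμ₀T : Measurable fun ω => μ₀ (A ω) (W ω) := hμ₀m.comp hAW
  -- ψ and its properties
  set ψ : Ωs → ℝ := fun ω => (indLe a₀ (A ω) - cdf0 F₀ a₀) / g (A ω) (W ω) with hψdef
  have hgabs : ∀ a w, K₁ ≤ |g a w| := fun a w => by
    rw [abs_of_pos (lt_of_lt_of_le hK₁ (hg a w))]; exact hg a w
  have hψm : Measurable ψ := (hhm.comp hA).div hgT
  have hψb : ∀ ω, |ψ ω| ≤ 1 / K₁ := by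
    intro ω
    rw [hψdef, abs_div]
    exact div_le_div₀ zero_le_one (hhb _) hK₁ (hgabs _ _)
  -- theta and phi
  have hθsm : StronglyMeasurable (thetaMu Q₀ μ) :=
    hμm.stronglyMeasurable.integral_prod_right' (ν := Q₀)
  have hθm : Measurable (thetaMu Q₀ μ) := hθsm.measurable
  have hθb := abs_thetaMu_le Q₀ μ hC
  have hγb := abs_gammaMu_le F₀ Q₀ μ hC
  set φ : 𝒲 → ℝ := fun w => ∫ u, (indLe a₀ u - cdf0 F₀ a₀) * μ u w ∂F₀ with hφdef
  have hf1m : Measurable fun q : ℝ × 𝒲 => (indLe a₀ q.1 - cdf0 F₀ a₀) * μ q.1 q.2 :=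
    (hhm.comp measurable_fst).mul hμm
  have hφsm : StronglyMeasurable φ := hf1m.stronglyMeasurable.integral_prod_left'
  have hφb : ∀ w, |φ w| ≤ 1 * C := by
    intro w
    have := norm_integral_le_of_norm_le_const (μ := F₀)
      (f := fun u => (indLe a₀ u - cdf0 F₀ a₀) * μ u w) (C := 1 * C)
      (Eventually.of_forall fun u => by
        rw [Real.norm_eq_abs]; exact abs_mul_le (hhb u) (hC u w))
    simpa [hφdef, Real.norm_eq_abs] using this
  -- integrability under P
  have hYint : Integrable Y P := by
    refine Integrable.mono' (hY2.add (integrable_const 1)) hY.aestronglyMeasurable ?_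
    filter_upwards with ω
    simp only [Pi.add_apply, Real.norm_eq_abs]
    nlinarith [sq_nonneg (|Y ω| - 1), sq_abs (Y ω), abs_nonneg (Y ω)]
  have hint1 : Integrable (fun ω => ψ ω * Y ω) P :=
    hYint.bdd_mul hψm.aestronglyMeasurable
      (c := 1 / K₁) (Eventually.of_forall fun ω => by rw [Real.norm_eq_abs]; exact hψb ω)
  have hint1' : Integrable (fun ω => ψ ω * μ (A ω) (W ω)) P :=
    integrable_of_ae_bdd (hψm.mul hμT).aestronglyMeasurable
      (C := 1 / K₁ * C) (Eventually.of_forall fun ω => abs_mul_le (hψb ω) (hC _ _))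
  have hint1'' : Integrable (fun ω => ψ ω * μ₀ (A ω) (W ω)) P :=
    integrable_of_ae_bdd (hψm.mul hμ₀T).aestronglyMeasurable
      (C := 1 / K₁ * K₀) (Eventually.of_forall fun ω => abs_mul_le (hψb ω) (hμ₀bd _ _))
  have hint2 : Integrable (fun ω =>
      (indLe a₀ (A ω) - cdf0 F₀ a₀) * (thetaMu Q₀ μ (A ω) - gammaMu F₀ Q₀ μ)) P :=
    integrable_of_ae_bdd
      (((hhm.comp hA).mul ((hθm.comp hA).sub measurable_const)).aestronglyMeasurable)
      (C := 1 * (C + C))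
      (Eventually.of_forall fun ω => abs_mul_le (hhb _) (abs_sub_le' (hθb _) hγb))
  have hint3 : Integrable (fun ω => φ (W ω)) P :=
    integrable_of_ae_bdd ((hφsm.measurable.comp hW).aestronglyMeasurable)
      (Eventually.of_forall fun ω => hφb _)
  -- splitting the integral
  have hsplit : ∫ ω, Dfun F₀ Q₀ μ g a₀ (Y ω) (A ω) (W ω) ∂P
      = ((∫ ω, ψ ω * Y ω ∂P - ∫ ω, ψ ω * μ (A ω) (W ω) ∂P)
          + ∫ ω, (indLe a₀ (A ω) - cdf0 F₀ a₀) * (thetaMu Q₀ μ (A ω) - gammaMu F₀ Q₀ μ) ∂P)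
        + (∫ ω, φ (W ω) ∂P - OmegaMu F₀ Q₀ μ a₀) := by
    have hpt : ∀ ω, Dfun F₀ Q₀ μ g a₀ (Y ω) (A ω) (W ω)
        = ((ψ ω * Y ω - ψ ω * μ (A ω) (W ω))
            + (indLe a₀ (A ω) - cdf0 F₀ a₀) * (thetaMu Q₀ μ (A ω) - gammaMu F₀ Q₀ μ))
          + (φ (W ω) - OmegaMu F₀ Q₀ μ a₀) := by
      intro ω
      simp only [Dfun, hψdef, hφdef]
      ring
    have hint12 : Integrable (fun ω => ψ ω * Y ω - ψ ω * μ (A ω) (W ω)) P :=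
      hint1.sub hint1'
    have hintL : Integrable (fun ω => (ψ ω * Y ω - ψ ω * μ (A ω) (W ω))
        + (indLe a₀ (A ω) - cdf0 F₀ a₀) * (thetaMu Q₀ μ (A ω) - gammaMu F₀ Q₀ μ)) P :=
      hint12.add hint2
    have hintR : Integrable (fun ω => φ (W ω) - OmegaMu F₀ Q₀ μ a₀) P :=
      hint3.sub (integrable_const _)
    have E0 : ∫ ω, Dfun F₀ Q₀ μ g a₀ (Y ω) (A ω) (W ω) ∂P
        = ∫ ω, (((ψ ω * Y ω - ψ ω * μ (A ω) (W ω))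
            + (indLe a₀ (A ω) - cdf0 F₀ a₀) * (thetaMu Q₀ μ (A ω) - gammaMu F₀ Q₀ μ))
          + (φ (W ω) - OmegaMu F₀ Q₀ μ a₀)) ∂P :=
      integral_congr_ae (Eventually.of_forall hpt)
    have E1 : ∫ ω, (((ψ ω * Y ω - ψ ω * μ (A ω) (W ω))
            + (indLe a₀ (A ω) - cdf0 F₀ a₀) * (thetaMu Q₀ μ (A ω) - gammaMu F₀ Q₀ μ))
          + (φ (W ω) - OmegaMu F₀ Q₀ μ a₀)) ∂P
        = (∫ ω, ((ψ ω * Y ω - ψ ω * μ (A ω) (W ω))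
            + (indLe a₀ (A ω) - cdf0 F₀ a₀) * (thetaMu Q₀ μ (A ω) - gammaMu F₀ Q₀ μ)) ∂P)
          + ∫ ω, (φ (W ω) - OmegaMu F₀ Q₀ μ a₀) ∂P :=
      integral_add hintL hintR
    have E2 : ∫ ω, ((ψ ω * Y ω - ψ ω * μ (A ω) (W ω))
            + (indLe a₀ (A ω) - cdf0 F₀ a₀) * (thetaMu Q₀ μ (A ω) - gammaMu F₀ Q₀ μ)) ∂P
        = (∫ ω, (ψ ω * Y ω - ψ ω * μ (A ω) (W ω)) ∂P)
          + ∫ ω, (indLe a₀ (A ω) - cdf0 F₀ a₀) * (thetaMu Q₀ μ (A ω) - gammaMu F₀ Q₀ μ) ∂P :=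
      integral_add hint12 hint2
    have E3 : ∫ ω, (ψ ω * Y ω - ψ ω * μ (A ω) (W ω)) ∂P
        = ∫ ω, ψ ω * Y ω ∂P - ∫ ω, ψ ω * μ (A ω) (W ω) ∂P :=
      integral_sub hint1 hint1'
    have E4 : ∫ ω, (φ (W ω) - OmegaMu F₀ Q₀ μ a₀) ∂P
        = ∫ ω, φ (W ω) ∂P - OmegaMu F₀ Q₀ μ a₀ := by
      rw [integral_sub hint3 (integrable_const _), integral_const]
      simp
    rw [E0, E1, E2, E3, E4]
  -- tower property
  have htower : ∫ ω, ψ ω * Y ω ∂P = ∫ ω, ψ ω * μ₀ (A ω) (W ω) ∂P := by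
    set m := MeasurableSpace.comap (fun ω => (A ω, W ω)) inferInstance with hmdef
    have hm : m ≤ _ := hAW.comap_le
    haveI : SigmaFinite (P.trim hm) := by
      haveI := isFiniteMeasure_trim (μ := P) hm
      infer_instance
    have hTm : Measurable[m] (fun ω => (A ω, W ω)) := Measurable.of_comap_le le_rfl
    have hψsm : StronglyMeasurable[m] ψ := by
      have h2 : Measurable[m] ψ :=
        (((hmeas_h F₀ a₀).comp measurable_fst).div hgm).comp hTm
      exact h2.stronglyMeasurable
    have hmul : P[ψ * Y|m] =ᵐ[P] ψ * P[Y|m] :=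
      condExp_mul_of_stronglyMeasurable_left hψsm hint1 hYint
    calc ∫ ω, ψ ω * Y ω ∂P = ∫ ω, (P[ψ * Y|m]) ω ∂P := (integral_condExp hm).symm
      _ = ∫ ω, ψ ω * (P[Y|m]) ω ∂P := integral_congr_ae hmul
      _ = ∫ ω, ψ ω * μ₀ (A ω) (W ω) ∂P := by
          refine integral_congr_ae (hcond.mono fun ω hω => ?_)
          exact congrArg (fun t => ψ ω * t) hω
  -- change of variables
  have hCOV : ∀ Φ : ℝ × 𝒲 → ℝ, Measurable Φ →
      ∫ ω, Φ (A ω, W ω) ∂P = ∫ q, g₀ q.1 q.2 * Φ q ∂(F₀.prod Q₀) := by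
    intro Φ hΦ
    have e1 : ∫ ω, Φ (A ω, W ω) ∂P
        = ∫ q, Φ q ∂(Measure.map (fun ω => (A ω, W ω)) P) :=
      (integral_map hAW.aemeasurable hΦ.aestronglyMeasurable).symm
    rw [e1, hjoint]
    have e2 : (fun q : ℝ × 𝒲 => ENNReal.ofReal (g₀ q.1 q.2))
        = fun q : ℝ × 𝒲 => ((Real.toNNReal (g₀ q.1 q.2) : NNReal) : ENNReal) := rfl
    rw [e2, integral_withDensity_eq_integral_smul
      (show Measurable fun q : ℝ × 𝒲 => (g₀ q.1 q.2).toNNReal from hg₀m.real_toNNReal) Φ]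
    refine integral_congr_ae ?_
    filter_upwards [hg₀bd] with q hq
    rw [NNReal.smul_def, smul_eq_mul, Real.coe_toNNReal _ (le_trans hK₁.le hq.1)]
  -- the remainder term
  have hdiff : ∫ ω, ψ ω * Y ω ∂P - ∫ ω, ψ ω * μ (A ω) (W ω) ∂P
      = ∫ q, g₀ q.1 q.2 * ((indLe a₀ q.1 - cdf0 F₀ a₀) / g q.1 q.2
          * (μ₀ q.1 q.2 - μ q.1 q.2)) ∂(F₀.prod Q₀) := by
    rw [htower, ← integral_sub hint1'' hint1']
    have hCm : Measurable fun q : ℝ × 𝒲 =>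
        (indLe a₀ q.1 - cdf0 F₀ a₀) / g q.1 q.2 * (μ₀ q.1 q.2 - μ q.1 q.2) :=
      ((hhm.comp measurable_fst).div hgm).mul (hμ₀m.sub hμm)
    rw [← hCOV _ hCm]
    refine integral_congr_ae (Eventually.of_forall fun ω => ?_)
    simp only [hψdef]
    ring
  -- transfer ∫ t2 to F₀
  have ht2 : ∫ ω, (indLe a₀ (A ω) - cdf0 F₀ a₀)
        * (thetaMu Q₀ μ (A ω) - gammaMu F₀ Q₀ μ) ∂P = OmegaMu F₀ Q₀ μ a₀ := by
    have hfm : AEStronglyMeasurable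
        (fun a => (indLe a₀ a - cdf0 F₀ a₀) * (thetaMu Q₀ μ a - gammaMu F₀ Q₀ μ))
        (Measure.map A P) :=
      (hhm.mul (hθm.sub measurable_const)).aestronglyMeasurable
    have e1 : ∫ a, (indLe a₀ a - cdf0 F₀ a₀) * (thetaMu Q₀ μ a - gammaMu F₀ Q₀ μ)
          ∂(Measure.map A P)
        = ∫ ω, (indLe a₀ (A ω) - cdf0 F₀ a₀)
            * (thetaMu Q₀ μ (A ω) - gammaMu F₀ Q₀ μ) ∂P :=
      integral_map hA.aemeasurable hfm
    rw [hAlaw] at e1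
    rw [← e1]
    have hintθ : Integrable (fun a => (indLe a₀ a - cdf0 F₀ a₀) * thetaMu Q₀ μ a) F₀ :=
      integrable_of_ae_bdd (hhm.mul hθm).aestronglyMeasurable (C := 1 * C)
        (Eventually.of_forall fun a => abs_mul_le (hhb a) (hθb a))
    have hinth : Integrable (fun a => indLe a₀ a - cdf0 F₀ a₀) F₀ :=
      integrable_of_ae_bdd hhm.aestronglyMeasurable (Eventually.of_forall hhb)
    simp_rw [mul_sub]
    rw [integral_sub hintθ (hinth.mul_const _), integral_mul_const, hint_h F₀ a₀,
      OmegaMu_theta F₀ Q₀ μ a₀]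
    ring
  -- ∫ t3 via Fubini
  have hintf1 : Integrable (fun q : ℝ × 𝒲 => (indLe a₀ q.1 - cdf0 F₀ a₀) * μ q.1 q.2)
      (F₀.prod Q₀) :=
    integrable_of_ae_bdd hf1m.aestronglyMeasurable (C := 1 * C)
      (Eventually.of_forall fun q => abs_mul_le (hhb q.1) (hC q.1 q.2))
  have ht3 : ∫ ω, φ (W ω) ∂P = OmegaMu F₀ Q₀ μ a₀ := by
    have hφam : AEStronglyMeasurable φ (Measure.map W P) := hφsm.aestronglyMeasurable
    have e1 : ∫ w, φ w ∂(Measure.map W P) = ∫ ω, φ (W ω) ∂P :=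
      integral_map hW.aemeasurable hφam
    rw [hWlaw] at e1
    rw [← e1]
    simp only [hφdef, OmegaMu]
    exact (integral_integral_swap
      (f := fun u w => (indLe a₀ u - cdf0 F₀ a₀) * μ u w) hintf1).symm
  -- product-integral forms of Omegas
  have hOmμ : OmegaMu F₀ Q₀ μ a₀
      = ∫ q, (indLe a₀ q.1 - cdf0 F₀ a₀) * μ q.1 q.2 ∂(F₀.prod Q₀) :=
    OmegaMu_prod F₀ Q₀ μ hμm hC a₀
  have hOm₀ : OmegaMu F₀ Q₀ μ₀ a₀
      = ∫ q, (indLe a₀ q.1 - cdf0 F₀ a₀) * μ₀ q.1 q.2 ∂(F₀.prod Q₀) :=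
    OmegaMu_prod F₀ Q₀ μ₀ hμ₀m hμ₀bd a₀
  -- RHS double integral as product integral and decomposition
  have hf2m : Measurable fun q : ℝ × 𝒲 => (indLe a₀ q.1 - cdf0 F₀ a₀) * μ₀ q.1 q.2 :=
    (hhm.comp measurable_fst).mul hμ₀m
  have hintf2 : Integrable (fun q : ℝ × 𝒲 => (indLe a₀ q.1 - cdf0 F₀ a₀) * μ₀ q.1 q.2)
      (F₀.prod Q₀) :=
    integrable_of_ae_bdd hf2m.aestronglyMeasurable (C := 1 * K₀)
      (Eventually.of_forall fun q => abs_mul_le (hhb q.1) (hμ₀bd q.1 q.2))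
  have hf5m : Measurable fun q : ℝ × 𝒲 =>
      g₀ q.1 q.2 * ((indLe a₀ q.1 - cdf0 F₀ a₀) / g q.1 q.2 * (μ₀ q.1 q.2 - μ q.1 q.2)) :=
    hg₀m.mul (((hhm.comp measurable_fst).div hgm).mul (hμ₀m.sub hμm))
  have hintf5 : Integrable (fun q : ℝ × 𝒲 =>
      g₀ q.1 q.2 * ((indLe a₀ q.1 - cdf0 F₀ a₀) / g q.1 q.2 * (μ₀ q.1 q.2 - μ q.1 q.2)))
      (F₀.prod Q₀) := by
    refine integrable_of_ae_bdd hf5m.aestronglyMeasurable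
      (C := K₂ * (1 / K₁ * (K₀ + C))) ?_
    filter_upwards [hg₀bd] with q hq
    refine abs_mul_le ?_ (abs_mul_le ?_ (abs_sub_le' (hμ₀bd _ _) (hC _ _)))
    · rw [abs_of_nonneg (le_trans hK₁.le hq.1)]; exact hq.2
    · rw [abs_div]
      exact div_le_div₀ zero_le_one (hhb _) hK₁ (hgabs _ _)
  have hf4m : Measurable fun q : ℝ × 𝒲 =>
      (indLe a₀ q.1 - cdf0 F₀ a₀) * (μ q.1 q.2 - μ₀ q.1 q.2)
        * (1 - g₀ q.1 q.2 / g q.1 q.2) :=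
    ((hhm.comp measurable_fst).mul (hμm.sub hμ₀m)).mul
      (measurable_const.sub (hg₀m.div hgm))
  have hintf4 : Integrable (fun q : ℝ × 𝒲 =>
      (indLe a₀ q.1 - cdf0 F₀ a₀) * (μ q.1 q.2 - μ₀ q.1 q.2)
        * (1 - g₀ q.1 q.2 / g q.1 q.2)) (F₀.prod Q₀) := by
    refine integrable_of_ae_bdd hf4m.aestronglyMeasurable
      (C := 1 * (C + K₀) * (1 + K₂ / K₁)) ?_
    filter_upwards [hg₀bd] with q hq
    refine abs_mul_le (abs_mul_le (hhb _) (abs_sub_le' (hC _ _) (hμ₀bd _ _)))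
      (abs_sub_le' (by norm_num) ?_)
    rw [abs_of_nonneg (div_nonneg (le_trans hK₁.le hq.1) (le_trans hK₁.le (hg _ _)))]
    exact div_le_div₀ (le_trans hK₁.le hK₁₂) hq.2 hK₁ (hg _ _)
  have hS : (∫ a, ∫ w, (indLe a₀ a - cdf0 F₀ a₀) * (μ a w - μ₀ a w)
          * (1 - g₀ a w / g a w) ∂Q₀ ∂F₀)
      = ∫ q, ((indLe a₀ q.1 - cdf0 F₀ a₀) * (μ q.1 q.2 - μ₀ q.1 q.2)
          * (1 - g₀ q.1 q.2 / g q.1 q.2)) ∂(F₀.prod Q₀) :=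
    integral_integral (f := fun a w => (indLe a₀ a - cdf0 F₀ a₀) * (μ a w - μ₀ a w)
      * (1 - g₀ a w / g a w)) hintf4
  have hdecomp : ∫ q, ((indLe a₀ q.1 - cdf0 F₀ a₀) * (μ q.1 q.2 - μ₀ q.1 q.2)
          * (1 - g₀ q.1 q.2 / g q.1 q.2)) ∂(F₀.prod Q₀)
      = (∫ q, (indLe a₀ q.1 - cdf0 F₀ a₀) * μ q.1 q.2 ∂(F₀.prod Q₀)
          - ∫ q, (indLe a₀ q.1 - cdf0 F₀ a₀) * μ₀ q.1 q.2 ∂(F₀.prod Q₀))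
        + ∫ q, g₀ q.1 q.2 * ((indLe a₀ q.1 - cdf0 F₀ a₀) / g q.1 q.2
            * (μ₀ q.1 q.2 - μ q.1 q.2)) ∂(F₀.prod Q₀) := by
    have hintf12 : Integrable (fun q : ℝ × 𝒲 =>
        (indLe a₀ q.1 - cdf0 F₀ a₀) * μ q.1 q.2
          - (indLe a₀ q.1 - cdf0 F₀ a₀) * μ₀ q.1 q.2) (F₀.prod Q₀) := hintf1.sub hintf2
    have hpt : ∀ q : ℝ × 𝒲, (indLe a₀ q.1 - cdf0 F₀ a₀) * (μ q.1 q.2 - μ₀ q.1 q.2)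
          * (1 - g₀ q.1 q.2 / g q.1 q.2)
        = ((indLe a₀ q.1 - cdf0 F₀ a₀) * μ q.1 q.2
            - (indLe a₀ q.1 - cdf0 F₀ a₀) * μ₀ q.1 q.2)
          + g₀ q.1 q.2 * ((indLe a₀ q.1 - cdf0 F₀ a₀) / g q.1 q.2
              * (μ₀ q.1 q.2 - μ q.1 q.2)) := by
      intro q
      have hgq : g q.1 q.2 ≠ 0 := ne_of_gt (lt_of_lt_of_le hK₁ (hg _ _))
      field_simp
      ring
    have E5 : ∫ q, ((indLe a₀ q.1 - cdf0 F₀ a₀) * (μ q.1 q.2 - μ₀ q.1 q.2)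
            * (1 - g₀ q.1 q.2 / g q.1 q.2)) ∂(F₀.prod Q₀)
        = ∫ q, (((indLe a₀ q.1 - cdf0 F₀ a₀) * μ q.1 q.2
              - (indLe a₀ q.1 - cdf0 F₀ a₀) * μ₀ q.1 q.2)
            + g₀ q.1 q.2 * ((indLe a₀ q.1 - cdf0 F₀ a₀) / g q.1 q.2
                * (μ₀ q.1 q.2 - μ q.1 q.2))) ∂(F₀.prod Q₀) :=
      integral_congr_ae (Eventually.of_forall hpt)
    have E6 : ∫ q, (((indLe a₀ q.1 - cdf0 F₀ a₀) * μ q.1 q.2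
              - (indLe a₀ q.1 - cdf0 F₀ a₀) * μ₀ q.1 q.2)
            + g₀ q.1 q.2 * ((indLe a₀ q.1 - cdf0 F₀ a₀) / g q.1 q.2
                * (μ₀ q.1 q.2 - μ q.1 q.2))) ∂(F₀.prod Q₀)
        = (∫ q, ((indLe a₀ q.1 - cdf0 F₀ a₀) * μ q.1 q.2
              - (indLe a₀ q.1 - cdf0 F₀ a₀) * μ₀ q.1 q.2) ∂(F₀.prod Q₀))
          + ∫ q, g₀ q.1 q.2 * ((indLe a₀ q.1 - cdf0 F₀ a₀) / g q.1 q.2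
              * (μ₀ q.1 q.2 - μ q.1 q.2)) ∂(F₀.prod Q₀) :=
      integral_add hintf12 hintf5
    have E7 : ∫ q, ((indLe a₀ q.1 - cdf0 F₀ a₀) * μ q.1 q.2
              - (indLe a₀ q.1 - cdf0 F₀ a₀) * μ₀ q.1 q.2) ∂(F₀.prod Q₀)
        = (∫ q, (indLe a₀ q.1 - cdf0 F₀ a₀) * μ q.1 q.2 ∂(F₀.prod Q₀))
          - ∫ q, (indLe a₀ q.1 - cdf0 F₀ a₀) * μ₀ q.1 q.2 ∂(F₀.prod Q₀) :=
      integral_sub hintf1 hintf2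
    rw [E5, E6, E7]
  rw [hsplit, ht2, ht3, hdiff, hS, hdecomp]
  rw [hOmμ, hOm₀]
  ring
end

section
/- Generalized double robustness of the one-step functional: Let μ : ℝ × 𝒲 → ℝ be bounded measurable and g : ℝ × 𝒲 → ℝ measurable with g ≥ K₁ > 0. Suppose there exist measurable sets S₁, S₂, S₃ ⊆ ℝ × 𝒲 whose union has probability 1 under the law of (A, W), such that μ(a,w) = μ₀(a,w) for all (a,w) ∈ S₁, g(a,w) = g₀(a,w) for all (a,w) ∈ S₂, and both μ(a,w) = μ₀(a,w) and g(a,w) = g₀(a,w) for all (a,w) ∈ S₃. Then for every a₀ ∈ ℝ, E[D_{a₀,μ,g}(Y, A, W)] = Ω₀(a₀). -/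
open MeasureTheory Set Filter

/-- A bounded a.e.-strongly-measurable function on a finite measure space is integrable. -/
lemma integrable_of_bound {α : Type*} [MeasurableSpace α] (ν : MeasureTheory.Measure α)
    [MeasureTheory.IsFiniteMeasure ν] (f : α → ℝ) (hf : MeasureTheory.AEStronglyMeasurable f ν)
    (C : ℝ) (h : ∀ x, |f x| ≤ C) : MeasureTheory.Integrable f ν :=
  MeasureTheory.Integrable.mono' (MeasureTheory.integrable_const C) hf
    (Filter.Eventually.of_forall (by simpa [Real.norm_eq_abs] using h))

/-- Generalized double robustness of the one-step functional. -/
theorem generalized_double_robustness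
    {Ωs 𝒲 : Type*} [MeasurableSpace Ωs] [MeasurableSpace 𝒲]
    (P : Measure Ωs) [IsProbabilityMeasure P]
    (Y A : Ωs → ℝ) (W : Ωs → 𝒲) (hY : Measurable Y) (hA : Measurable A) (hW : Measurable W)
    (hY2 : Integrable (fun ω => Y ω ^ 2) P)
    (F₀ : Measure ℝ) [IsProbabilityMeasure F₀] (Q₀ : Measure 𝒲) [IsProbabilityMeasure Q₀]
    (hAlaw : Measure.map A P = F₀) (hWlaw : Measure.map W P = Q₀)
    (K₀ K₁ K₂ : ℝ) (hK₀ : 0 ≤ K₀) (hK₁ : 0 < K₁) (hK₁₂ : K₁ ≤ K₂)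
    (g₀ : ℝ → 𝒲 → ℝ) (hg₀m : Measurable (Function.uncurry g₀))
    (hjoint : Measure.map (fun ω => (A ω, W ω)) P
      = (F₀.prod Q₀).withDensity (fun q => ENNReal.ofReal (g₀ q.1 q.2)))
    (hg₀bd : ∀ᵐ q ∂(F₀.prod Q₀), K₁ ≤ g₀ q.1 q.2 ∧ g₀ q.1 q.2 ≤ K₂)
    (μ₀ : ℝ → 𝒲 → ℝ) (hμ₀m : Measurable (Function.uncurry μ₀))
    (hμ₀bd : ∀ a w, |μ₀ a w| ≤ K₀)
    (hcond : MeasureTheory.condExp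
        (MeasurableSpace.comap (fun ω => (A ω, W ω)) inferInstance) P Y
      =ᵐ[P] fun ω => μ₀ (A ω) (W ω))
    (μ : ℝ → 𝒲 → ℝ) (hμm : Measurable (Function.uncurry μ))
    (hμbd : ∃ C : ℝ, ∀ a w, |μ a w| ≤ C)
    (g : ℝ → 𝒲 → ℝ) (hgm : Measurable (Function.uncurry g))
    (hg : ∀ a w, K₁ ≤ g a w)
    (S₁ S₂ S₃ : Set (ℝ × 𝒲)) (hS₁ : MeasurableSet S₁) (hS₂ : MeasurableSet S₂)
    (hS₃ : MeasurableSet S₃)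
    (hcover : Measure.map (fun ω => (A ω, W ω)) P (S₁ ∪ S₂ ∪ S₃) = 1)
    (h₁ : ∀ q ∈ S₁, μ q.1 q.2 = μ₀ q.1 q.2)
    (h₂ : ∀ q ∈ S₂, g q.1 q.2 = g₀ q.1 q.2)
    (h₃ : ∀ q ∈ S₃, μ q.1 q.2 = μ₀ q.1 q.2 ∧ g q.1 q.2 = g₀ q.1 q.2) :
    ∀ a₀ : ℝ, ∫ ω, Dfun F₀ Q₀ μ g a₀ (Y ω) (A ω) (W ω) ∂P = OmegaMu F₀ Q₀ μ₀ a₀ := by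
  intro a₀
  obtain ⟨C₀, hC₀⟩ := hμbd
  set C := |C₀| with hCdef
  have hC : ∀ a w, |μ a w| ≤ C := fun a w => (hC₀ a w).trans (le_abs_self _)
  have hC0 : (0:ℝ) ≤ C := abs_nonneg _
  have hABm : Measurable (fun ω => (A ω, W ω)) := hA.prodMk hW
  have hμm' : Measurable (fun q : ℝ × 𝒲 => μ q.1 q.2) := hμm
  have hμ₀m' : Measurable (fun q : ℝ × 𝒲 => μ₀ q.1 q.2) := hμ₀m
  have hgm' : Measurable (fun q : ℝ × 𝒲 => g q.1 q.2) := hgm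
  have hg₀m' : Measurable (fun q : ℝ × 𝒲 => g₀ q.1 q.2) := hg₀m
  -- the centered indicator
  set k : ℝ → ℝ := fun a => indLe a₀ a - cdf0 F₀ a₀ with hkdef
  have hk' : ∀ x, indLe a₀ x - cdf0 F₀ a₀ = k x := fun _ => rfl
  have hkm : Measurable k := by
    have h1 : Measurable (fun a : ℝ => indLe a₀ a) := by
      simp only [indLe]
      exact Measurable.ite measurableSet_Iic measurable_const measurable_const
    exact h1.sub measurable_const
  have hcdf0 : (0:ℝ) ≤ cdf0 F₀ a₀ := ENNReal.toReal_nonneg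
  have hcdf1 : cdf0 F₀ a₀ ≤ 1 := by
    have := ENNReal.toReal_mono (by norm_num) (prob_le_one (μ := F₀) (s := Iic a₀))
    simpa [cdf0] using this
  have hkb : ∀ a, |k a| ≤ 2 := by
    intro a
    have h3 : indLe a₀ a = 1 ∨ indLe a₀ a = 0 := by
      simp only [indLe]; split <;> simp
    rw [abs_le]
    rcases h3 with h3 | h3 <;> simp only [hkdef] <;> rw [h3] <;> constructor <;> linarith
  have hkg : ∀ a w, |k a / g a w| ≤ 2 / K₁ := by
    intro a w
    rw [abs_div, abs_of_pos (lt_of_lt_of_le hK₁ (hg _ _))]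
    exact div_le_div₀ (by norm_num) (hkb _) hK₁ (hg _ _)
  -- integrability of Y
  have hYint : Integrable Y P := by
    refine (hY2.add (integrable_const 1)).mono' hY.aestronglyMeasurable
      (Filter.Eventually.of_forall fun ω => ?_)
    simp only [Real.norm_eq_abs, Pi.add_apply]
    nlinarith [sq_nonneg (|Y ω| - 1), sq_abs (Y ω), abs_nonneg (Y ω)]
  -- marginal change of variables
  have hmapA : ∀ ψ : ℝ → ℝ, AEStronglyMeasurable ψ F₀ →
      ∫ ω, ψ (A ω) ∂P = ∫ a, ψ a ∂F₀ := by
    intro ψ hψ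
    rw [← hAlaw] at hψ ⊢
    exact (integral_map hA.aemeasurable hψ).symm
  have hmapW : ∀ ψ : 𝒲 → ℝ, AEStronglyMeasurable ψ Q₀ →
      ∫ ω, ψ (W ω) ∂P = ∫ w, ψ w ∂Q₀ := by
    intro ψ hψ
    rw [← hWlaw] at hψ ⊢
    exact (integral_map hW.aemeasurable hψ).symm
  -- joint change of variables
  have hcov : ∀ f : ℝ × 𝒲 → ℝ, Measurable f →
      ∫ ω, f (A ω, W ω) ∂P = ∫ q, g₀ q.1 q.2 * f q ∂(F₀.prod Q₀) := by
    intro f hf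
    rw [← integral_map hABm.aemeasurable hf.aestronglyMeasurable, hjoint]
    have hnn : Measurable (fun q : ℝ × 𝒲 => (g₀ q.1 q.2).toNNReal) := hg₀m'.real_toNNReal
    have hofd : (fun q : ℝ × 𝒲 => ENNReal.ofReal (g₀ q.1 q.2))
        = fun q => ((fun q : ℝ × 𝒲 => (g₀ q.1 q.2).toNNReal) q : ENNReal) := rfl
    rw [hofd, integral_withDensity_eq_integral_smul hnn f]
    refine integral_congr_ae ?_
    filter_upwards [hg₀bd] with q hq
    rw [NNReal.smul_def, smul_eq_mul, Real.coe_toNNReal _ (le_trans hK₁.le hq.1)]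
  -- tower property
  have tower : ∀ φ : ℝ × 𝒲 → ℝ, Measurable φ → ∀ Cφ : ℝ, (∀ q, |φ q| ≤ Cφ) →
      ∫ ω, Y ω * φ (A ω, W ω) ∂P = ∫ ω, μ₀ (A ω) (W ω) * φ (A ω, W ω) ∂P := by
    intro φ hφ Cφ hφb
    have hm0 := hABm.comap_le
    set m := MeasurableSpace.comap (fun ω => (A ω, W ω)) inferInstance with hm_def
    have hm := hm0
    haveI : SigmaFinite (P.trim hm) := inferInstance
    have hφsm : StronglyMeasurable[m] (fun ω => φ (A ω, W ω)) := by
      rw [hm_def]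
      exact hφ.stronglyMeasurable.comp_measurable (measurable_iff_comap_le.mpr le_rfl)
    have hprod_int : Integrable ((fun ω => φ (A ω, W ω)) * Y) P := by
      refine (hYint.abs.const_mul Cφ).mono'
        (((hφ.comp hABm).aestronglyMeasurable).mul hY.aestronglyMeasurable)
        (Filter.Eventually.of_forall fun ω => ?_)
      simp only [Pi.mul_apply, Real.norm_eq_abs, abs_mul]
      exact mul_le_mul_of_nonneg_right (hφb _) (abs_nonneg _)
    have step := condExp_mul_of_stronglyMeasurable_left (μ := P) hφsm hprod_int hYint
    calc ∫ ω, Y ω * φ (A ω, W ω) ∂P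
        = ∫ ω, ((fun ω => φ (A ω, W ω)) * Y) ω ∂P :=
          integral_congr_ae (Filter.Eventually.of_forall fun ω => by
            simp [Pi.mul_apply, mul_comm])
      _ = ∫ ω, (P[(fun ω => φ (A ω, W ω)) * Y | m]) ω ∂P := (integral_condExp hm).symm
      _ = ∫ ω, φ (A ω, W ω) * (P[Y|m]) ω ∂P :=
          integral_congr_ae (step.mono fun ω h => by simpa [Pi.mul_apply] using h)
      _ = ∫ ω, μ₀ (A ω) (W ω) * φ (A ω, W ω) ∂P := by
          refine integral_congr_ae (hcond.mono fun ω h => ?_)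
          have h' : (P[Y|m]) ω = μ₀ (A ω) (W ω) := h
          show φ (A ω, W ω) * (P[Y|m]) ω = μ₀ (A ω) (W ω) * φ (A ω, W ω)
          rw [h']; ring
  -- the three sets cover a.e. under the product measure
  haveI : IsProbabilityMeasure (Measure.map (fun ω => (A ω, W ω)) P) :=
    Measure.isProbabilityMeasure_map hABm.aemeasurable
  have hSm : MeasurableSet (S₁ ∪ S₂ ∪ S₃) := (hS₁.union hS₂).union hS₃
  have hν0 : Measure.map (fun ω => (A ω, W ω)) P (S₁ ∪ S₂ ∪ S₃)ᶜ = 0 := by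
    rw [measure_compl hSm (measure_ne_top _ _), hcover, measure_univ, tsub_self]
  have hπ0 : (F₀.prod Q₀) (S₁ ∪ S₂ ∪ S₃)ᶜ = 0 := by
    rw [hjoint, withDensity_apply _ hSm.compl] at hν0
    have hlow : ∀ᵐ q ∂(F₀.prod Q₀).restrict (S₁ ∪ S₂ ∪ S₃)ᶜ,
        ENNReal.ofReal K₁ ≤ ENNReal.ofReal (g₀ q.1 q.2) :=
      ae_restrict_of_ae (hg₀bd.mono fun q hq => ENNReal.ofReal_le_ofReal hq.1)
    have hle : ENNReal.ofReal K₁ * (F₀.prod Q₀) (S₁ ∪ S₂ ∪ S₃)ᶜ ≤ 0 := by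
      calc ENNReal.ofReal K₁ * (F₀.prod Q₀) (S₁ ∪ S₂ ∪ S₃)ᶜ
          = ∫⁻ _ in (S₁ ∪ S₂ ∪ S₃)ᶜ, ENNReal.ofReal K₁ ∂(F₀.prod Q₀) :=
            (setLIntegral_const _ _).symm
        _ ≤ ∫⁻ q in (S₁ ∪ S₂ ∪ S₃)ᶜ, ENNReal.ofReal (g₀ q.1 q.2) ∂(F₀.prod Q₀) :=
            lintegral_mono_ae hlow
        _ = 0 := hν0
    have hK₁ne : ENNReal.ofReal K₁ ≠ 0 := (ENNReal.ofReal_pos.mpr hK₁).ne'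
    rcases (mul_eq_zero.mp (le_antisymm hle zero_le)) with h | h
    · exact absurd h hK₁ne
    · exact h
  have haeS : ∀ᵐ q ∂(F₀.prod Q₀), q ∈ S₁ ∪ S₂ ∪ S₃ := by
    rw [ae_iff]
    exact hπ0
  -- key a.e. identity
  have key : ∀ᵐ q ∂(F₀.prod Q₀),
      g₀ q.1 q.2 * ((μ₀ q.1 q.2 - μ q.1 q.2) * (k q.1 / g q.1 q.2))
        = k q.1 * (μ₀ q.1 q.2 - μ q.1 q.2) := by
    filter_upwards [haeS] with q hq
    rcases hq with (hq | hq) | hq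
    · rw [h₁ q hq]; ring
    · have hgq : g q.1 q.2 ≠ 0 := (lt_of_lt_of_le hK₁ (hg _ _)).ne'
      rw [← h₂ q hq]
      field_simp
    · rw [(h₃ q hq).1]; ring
  -- bounds on auxiliary functions
  have hθb : ∀ a, |thetaMu Q₀ μ a| ≤ C := by
    intro a
    have := norm_integral_le_of_norm_le_const (μ := Q₀) (f := fun w => μ a w)
      (Filter.Eventually.of_forall fun w => by simpa [Real.norm_eq_abs] using hC a w)
    simpa [thetaMu, Real.norm_eq_abs, measure_univ] using this
  have hθm : StronglyMeasurable (thetaMu Q₀ μ) :=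
    hμm.stronglyMeasurable.integral_prod_right'
  have hhm : StronglyMeasurable (fun w => ∫ u, k u * μ u w ∂F₀) := by
    exact StronglyMeasurable.integral_prod_left'
      (f := fun q : ℝ × 𝒲 => k q.1 * μ q.1 q.2)
      (((hkm.comp measurable_fst).mul hμm').stronglyMeasurable)
  have hhb : ∀ w, |∫ u, k u * μ u w ∂F₀| ≤ 2 * C := by
    intro w
    have := norm_integral_le_of_norm_le_const (μ := F₀) (f := fun u => k u * μ u w)
      (Filter.Eventually.of_forall fun u => by
        simp only [Real.norm_eq_abs, abs_mul]
        exact mul_le_mul (hkb u) (hC u w) (abs_nonneg _) (by norm_num))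
    simpa [Real.norm_eq_abs, measure_univ] using this
  -- integrability of the pieces
  have int_a : Integrable (fun ω => Y ω * (k (A ω) / g (A ω) (W ω))) P := by
    refine (hYint.abs.const_mul (2 / K₁)).mono'
      (hY.aestronglyMeasurable.mul
        (((hkm.comp hA).div (hgm'.comp hABm)).aestronglyMeasurable))
      (Filter.Eventually.of_forall fun ω => ?_)
    simp only [Real.norm_eq_abs, abs_mul]
    rw [mul_comm (2 / K₁) |Y ω|]
    exact mul_le_mul_of_nonneg_left (hkg _ _) (abs_nonneg _)
  have int_b : Integrable (fun ω => μ (A ω) (W ω) * (k (A ω) / g (A ω) (W ω))) P := by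
    refine integrable_of_bound P _ (((hμm'.comp hABm).mul
      ((hkm.comp hA).div (hgm'.comp hABm))).aestronglyMeasurable) (C * (2 / K₁))
      fun ω => ?_
    rw [abs_mul]
    exact mul_le_mul (hC _ _) (hkg _ _) (abs_nonneg _) hC0
  have int_a0 : Integrable (fun ω => μ₀ (A ω) (W ω) * (k (A ω) / g (A ω) (W ω))) P := by
    refine integrable_of_bound P _ (((hμ₀m'.comp hABm).mul
      ((hkm.comp hA).div (hgm'.comp hABm))).aestronglyMeasurable) (K₀ * (2 / K₁))
      fun ω => ?_
    rw [abs_mul]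
    exact mul_le_mul (hμ₀bd _ _) (hkg _ _) (abs_nonneg _) hK₀
  have int_c : Integrable (fun ω => k (A ω) * thetaMu Q₀ μ (A ω)) P :=
    integrable_of_bound P _ (((hkm.mul hθm.measurable).comp hA).aestronglyMeasurable)
      (2 * C) fun ω => by
        rw [abs_mul]
        exact mul_le_mul (hkb _) (hθb _) (abs_nonneg _) (by norm_num)
  have int_d : Integrable (fun ω => k (A ω)) P :=
    integrable_of_bound P _ ((hkm.comp hA).aestronglyMeasurable) 2 fun ω => hkb _
  have int_e : Integrable (fun ω => ∫ u, k u * μ u (W ω) ∂F₀) P :=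
    integrable_of_bound P _ ((hhm.measurable.comp hW).aestronglyMeasurable)
      (2 * C) fun ω => hhb _
  have int_kμ : Integrable (fun q : ℝ × 𝒲 => k q.1 * μ q.1 q.2) (F₀.prod Q₀) :=
    integrable_of_bound _ _ (((hkm.comp measurable_fst).mul hμm').aestronglyMeasurable)
      (2 * C) fun q => by
        rw [abs_mul]
        exact mul_le_mul (hkb _) (hC _ _) (abs_nonneg _) (by norm_num)
  have int_kμ₀ : Integrable (fun q : ℝ × 𝒲 => k q.1 * μ₀ q.1 q.2) (F₀.prod Q₀) :=
    integrable_of_bound _ _ (((hkm.comp measurable_fst).mul hμ₀m').aestronglyMeasurable)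
      (2 * K₀) fun q => by
        rw [abs_mul]
        exact mul_le_mul (hkb _) (hμ₀bd _ _) (abs_nonneg _) (by norm_num)
  -- value of each piece
  have E_a : ∫ ω, Y ω * (k (A ω) / g (A ω) (W ω)) ∂P
      = ∫ ω, μ₀ (A ω) (W ω) * (k (A ω) / g (A ω) (W ω)) ∂P := by
    have := tower (fun q => k q.1 / g q.1 q.2)
      ((hkm.comp measurable_fst).div hgm') (2 / K₁) (fun q => hkg _ _)
    simpa using this
  have E_prod : ∫ q, k q.1 * μ q.1 q.2 ∂(F₀.prod Q₀) = OmegaMu F₀ Q₀ μ a₀ := by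
    rw [integral_prod _ int_kμ]
    simp only [OmegaMu, hk']
  have E_prod₀ : ∫ q, k q.1 * μ₀ q.1 q.2 ∂(F₀.prod Q₀) = OmegaMu F₀ Q₀ μ₀ a₀ := by
    rw [integral_prod _ int_kμ₀]
    simp only [OmegaMu, hk']
  have E_ab : (∫ ω, μ₀ (A ω) (W ω) * (k (A ω) / g (A ω) (W ω)) ∂P)
      - ∫ ω, μ (A ω) (W ω) * (k (A ω) / g (A ω) (W ω)) ∂P
      = OmegaMu F₀ Q₀ μ₀ a₀ - OmegaMu F₀ Q₀ μ a₀ := by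
    calc (∫ ω, μ₀ (A ω) (W ω) * (k (A ω) / g (A ω) (W ω)) ∂P)
        - ∫ ω, μ (A ω) (W ω) * (k (A ω) / g (A ω) (W ω)) ∂P
        = ∫ ω, (μ₀ (A ω) (W ω) * (k (A ω) / g (A ω) (W ω))
            - μ (A ω) (W ω) * (k (A ω) / g (A ω) (W ω))) ∂P :=
          (integral_sub int_a0 int_b).symm
      _ = ∫ ω, (fun q : ℝ × 𝒲 => (μ₀ q.1 q.2 - μ q.1 q.2) * (k q.1 / g q.1 q.2))
            (A ω, W ω) ∂P :=
          integral_congr_ae (Filter.Eventually.of_forall fun ω => by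
            show μ₀ (A ω) (W ω) * (k (A ω) / g (A ω) (W ω))
                - μ (A ω) (W ω) * (k (A ω) / g (A ω) (W ω))
              = (μ₀ (A ω) (W ω) - μ (A ω) (W ω)) * (k (A ω) / g (A ω) (W ω))
            ring)
      _ = ∫ q, g₀ q.1 q.2 * ((μ₀ q.1 q.2 - μ q.1 q.2) * (k q.1 / g q.1 q.2))
            ∂(F₀.prod Q₀) :=
          hcov _ (by exact (hμ₀m'.sub hμm').mul ((hkm.comp measurable_fst).div hgm'))
      _ = ∫ q, k q.1 * (μ₀ q.1 q.2 - μ q.1 q.2) ∂(F₀.prod Q₀) := integral_congr_ae key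
      _ = ∫ q : ℝ × 𝒲, (k q.1 * μ₀ q.1 q.2 - k q.1 * μ q.1 q.2) ∂(F₀.prod Q₀) :=
          integral_congr_ae (Filter.Eventually.of_forall fun q => by
            show k q.1 * (μ₀ q.1 q.2 - μ q.1 q.2) = k q.1 * μ₀ q.1 q.2 - k q.1 * μ q.1 q.2
            ring)
      _ = (∫ q, k q.1 * μ₀ q.1 q.2 ∂(F₀.prod Q₀))
            - ∫ q, k q.1 * μ q.1 q.2 ∂(F₀.prod Q₀) := integral_sub int_kμ₀ int_kμ
      _ = OmegaMu F₀ Q₀ μ₀ a₀ - OmegaMu F₀ Q₀ μ a₀ := by rw [E_prod₀, E_prod]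
  have E_c : ∫ ω, k (A ω) * thetaMu Q₀ μ (A ω) ∂P = OmegaMu F₀ Q₀ μ a₀ := by
    rw [hmapA (fun a => k a * thetaMu Q₀ μ a) ((hkm.mul hθm.measurable).aestronglyMeasurable)]
    simp only [OmegaMu, hk']
    refine integral_congr_ae (Filter.Eventually.of_forall fun a => ?_)
    show k a * thetaMu Q₀ μ a = ∫ w, k a * μ a w ∂Q₀
    rw [integral_const_mul]
    rfl
  have int_indLe : ∫ a, indLe a₀ a ∂F₀ = cdf0 F₀ a₀ := by
    have hind : (fun a => indLe a₀ a) = (Iic a₀).indicator (fun _ => (1:ℝ)) := by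
      funext a; simp [indLe, Set.indicator_apply, mem_Iic]
    rw [hind, integral_indicator measurableSet_Iic, setIntegral_const]
    simp [cdf0]; rfl
  have E_d : ∫ ω, k (A ω) ∂P = 0 := by
    rw [hmapA _ (hkm.aestronglyMeasurable)]
    have hii : Integrable (fun a => indLe a₀ a) F₀ := by
      refine integrable_of_bound _ _ ?_ 1 fun a => ?_
      · exact (Measurable.ite measurableSet_Iic measurable_const
          measurable_const : Measurable (fun a : ℝ => if a ≤ a₀ then (1:ℝ) else 0)).aestronglyMeasurable
      · simp only [indLe]; split <;> norm_num
    calc ∫ a, k a ∂F₀ = ∫ a, (indLe a₀ a - cdf0 F₀ a₀) ∂F₀ := rfl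
      _ = (∫ a, indLe a₀ a ∂F₀) - ∫ _, cdf0 F₀ a₀ ∂F₀ := integral_sub hii (integrable_const _)
      _ = 0 := by rw [int_indLe, integral_const]; simp
  have E_e : ∫ ω, (∫ u, k u * μ u (W ω) ∂F₀) ∂P = OmegaMu F₀ Q₀ μ a₀ := by
    rw [hmapW _ (hhm.measurable.aestronglyMeasurable)]
    have hswap := integral_integral_swap (f := fun u w => k u * μ u w)
      (μ := F₀) (ν := Q₀) int_kμ
    simp only [OmegaMu, hk']
    exact hswap.symm
  -- pointwise decomposition of Dfun
  have hpoint : ∀ ω, Dfun F₀ Q₀ μ g a₀ (Y ω) (A ω) (W ω)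
      = Y ω * (k (A ω) / g (A ω) (W ω))
        - μ (A ω) (W ω) * (k (A ω) / g (A ω) (W ω))
        + k (A ω) * thetaMu Q₀ μ (A ω)
        - gammaMu F₀ Q₀ μ * k (A ω)
        + ((∫ u, k u * μ u (W ω) ∂F₀) - OmegaMu F₀ Q₀ μ a₀) := by
    intro ω
    simp only [Dfun, hk']
    ring
  rw [integral_congr_ae (Filter.Eventually.of_forall hpoint)]
  have I1 : Integrable (fun ω => Y ω * (k (A ω) / g (A ω) (W ω))
      - μ (A ω) (W ω) * (k (A ω) / g (A ω) (W ω))) P := int_a.sub int_b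
  have I2 : Integrable (fun ω => Y ω * (k (A ω) / g (A ω) (W ω))
      - μ (A ω) (W ω) * (k (A ω) / g (A ω) (W ω))
      + k (A ω) * thetaMu Q₀ μ (A ω)) P := I1.add int_c
  have I4 : Integrable (fun ω => gammaMu F₀ Q₀ μ * k (A ω)) P := int_d.const_mul _
  have I3 : Integrable (fun ω => Y ω * (k (A ω) / g (A ω) (W ω))
      - μ (A ω) (W ω) * (k (A ω) / g (A ω) (W ω))
      + k (A ω) * thetaMu Q₀ μ (A ω)
      - gammaMu F₀ Q₀ μ * k (A ω)) P := I2.sub I4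
  have I5 : Integrable (fun ω => (∫ u, k u * μ u (W ω) ∂F₀) - OmegaMu F₀ Q₀ μ a₀) P :=
    int_e.sub (integrable_const _)
  have s1 : ∫ ω, (Y ω * (k (A ω) / g (A ω) (W ω))
        - μ (A ω) (W ω) * (k (A ω) / g (A ω) (W ω))
        + k (A ω) * thetaMu Q₀ μ (A ω)
        - gammaMu F₀ Q₀ μ * k (A ω)
        + ((∫ u, k u * μ u (W ω) ∂F₀) - OmegaMu F₀ Q₀ μ a₀)) ∂P
      = (∫ ω, (Y ω * (k (A ω) / g (A ω) (W ω))
        - μ (A ω) (W ω) * (k (A ω) / g (A ω) (W ω))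
        + k (A ω) * thetaMu Q₀ μ (A ω)
        - gammaMu F₀ Q₀ μ * k (A ω)) ∂P)
      + ∫ ω, ((∫ u, k u * μ u (W ω) ∂F₀) - OmegaMu F₀ Q₀ μ a₀) ∂P := integral_add I3 I5
  have s2 : ∫ ω, (Y ω * (k (A ω) / g (A ω) (W ω))
        - μ (A ω) (W ω) * (k (A ω) / g (A ω) (W ω))
        + k (A ω) * thetaMu Q₀ μ (A ω)
        - gammaMu F₀ Q₀ μ * k (A ω)) ∂P
      = (∫ ω, (Y ω * (k (A ω) / g (A ω) (W ω))
        - μ (A ω) (W ω) * (k (A ω) / g (A ω) (W ω))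
        + k (A ω) * thetaMu Q₀ μ (A ω)) ∂P)
      - ∫ ω, gammaMu F₀ Q₀ μ * k (A ω) ∂P := integral_sub I2 I4
  have s3 : ∫ ω, (Y ω * (k (A ω) / g (A ω) (W ω))
        - μ (A ω) (W ω) * (k (A ω) / g (A ω) (W ω))
        + k (A ω) * thetaMu Q₀ μ (A ω)) ∂P
      = (∫ ω, (Y ω * (k (A ω) / g (A ω) (W ω))
        - μ (A ω) (W ω) * (k (A ω) / g (A ω) (W ω))) ∂P)
      + ∫ ω, k (A ω) * thetaMu Q₀ μ (A ω) ∂P := integral_add I1 int_c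
  have s4 : ∫ ω, (Y ω * (k (A ω) / g (A ω) (W ω))
        - μ (A ω) (W ω) * (k (A ω) / g (A ω) (W ω))) ∂P
      = (∫ ω, Y ω * (k (A ω) / g (A ω) (W ω)) ∂P)
      - ∫ ω, μ (A ω) (W ω) * (k (A ω) / g (A ω) (W ω)) ∂P := integral_sub int_a int_b
  have s5 : ∫ ω, ((∫ u, k u * μ u (W ω) ∂F₀) - OmegaMu F₀ Q₀ μ a₀) ∂P
      = (∫ ω, (∫ u, k u * μ u (W ω) ∂F₀) ∂P) - OmegaMu F₀ Q₀ μ a₀ := by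
    have h := integral_sub int_e (integrable_const (OmegaMu F₀ Q₀ μ a₀))
    simp only [integral_const, measure_univ, ENNReal.toReal_one, probReal_univ, one_smul] at h
    exact h
  have s6 : ∫ ω, gammaMu F₀ Q₀ μ * k (A ω) ∂P
      = gammaMu F₀ Q₀ μ * ∫ ω, k (A ω) ∂P := integral_const_mul _ _
  rw [s1, s2, s3, s4, s5, s6, E_a, E_ab, E_c, E_d, E_e]
  ring
end

section
/- Doubly-robust bound on the product remainder: Let (𝒳, 𝒢, P) be a probability space and let μ₀, μ_∞, μ', g₀, g_∞, g' : 𝒳 → ℝ be measurable functions square-integrable with respect to P. Suppose there exist measurable sets S₁, S₂, S₃ ⊆ 𝒳 with P(S₁ ∪ S₂ ∪ S₃) = 1 such that μ_∞ = μ₀ on S₁, g_∞ = g₀ on S₂, and both μ_∞ = μ₀ and g_∞ = g₀ on S₃. Then ∫ |μ' − μ₀|·|g' − g₀| dP ≤ ‖μ' − μ_∞‖_{L²(P)}·‖g' − g₀‖_{L²(P)} + ‖μ' − μ₀‖_{L²(P)}·‖g' − g_∞‖_{L²(P)} + ‖μ' − μ_∞‖_{L²(P)}·‖g' − g_∞‖_{L²(P)}.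 -/
open MeasureTheory

lemma abs_mul_integrable_aux {𝒳 : Type*} [MeasurableSpace 𝒳] (P : Measure 𝒳)
    {a b : 𝒳 → ℝ} (hma : Measurable a) (hmb : Measurable b)
    (ha : MemLp a 2 P) (hb : MemLp b 2 P) :
    Integrable (fun x => |a x| * |b x|) P := by
  refine Integrable.mono' ((ha.integrable_sq.add hb.integrable_sq).div_const 2)
    ((hma.abs.mul hmb.abs).aestronglyMeasurable) ?_
  filter_upwards with x
  have h1 := abs_nonneg (a x)
  have h2 := abs_nonneg (b x)
  have h3 := sq_abs (a x)
  have h4 := sq_abs (b x)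
  rw [Real.norm_eq_abs, abs_of_nonneg (mul_nonneg h1 h2)]
  simp only [Pi.add_apply]
  nlinarith [sq_nonneg (|a x| - |b x|)]

lemma cauchy_schwarz_aux {𝒳 : Type*} [MeasurableSpace 𝒳] (P : Measure 𝒳)
    {a b : 𝒳 → ℝ} (ha : MemLp a 2 P) (hb : MemLp b 2 P) :
    ∫ x, |a x| * |b x| ∂P
      ≤ Real.sqrt (∫ x, a x ^ 2 ∂P) * Real.sqrt (∫ x, b x ^ 2 ∂P) := by
  have hpq : (2 : ℝ).HolderConjugate 2 := by constructor <;> norm_num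
  have h2 : ENNReal.ofReal (2 : ℝ) = 2 := by norm_num
  have := integral_mul_le_Lp_mul_Lq_of_nonneg (μ := P) hpq
    (f := fun x => |a x|) (g := fun x => |b x|)
    (Filter.Eventually.of_forall fun x => abs_nonneg _)
    (Filter.Eventually.of_forall fun x => abs_nonneg _)
    (h2 ▸ ha.abs) (h2 ▸ hb.abs)
  calc ∫ x, |a x| * |b x| ∂P
      ≤ (∫ x, |a x| ^ (2:ℝ) ∂P) ^ ((1:ℝ)/2) * (∫ x, |b x| ^ (2:ℝ) ∂P) ^ ((1:ℝ)/2) := this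
    _ = Real.sqrt (∫ x, a x ^ 2 ∂P) * Real.sqrt (∫ x, b x ^ 2 ∂P) := by
        have key : ∀ (f : 𝒳 → ℝ),
            (∫ x, |f x| ^ (2:ℝ) ∂P) ^ ((1:ℝ)/2) = Real.sqrt (∫ x, f x ^ 2 ∂P) := by
          intro f
          have : (fun x => |f x| ^ (2:ℝ)) = fun x => f x ^ 2 := by
            funext x
            rw [show ((2:ℝ) = ((2:ℕ) : ℝ)) by norm_num, Real.rpow_natCast, sq_abs]
          rw [this, Real.sqrt_eq_rpow]
        rw [key a, key b]

/-- Doubly-robust bound on the product remainder. -/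
theorem doubly_robust_product_remainder_bound
    {𝒳 : Type*} [MeasurableSpace 𝒳] (P : Measure 𝒳) [IsProbabilityMeasure P]
    (μ₀ μinf μ' g₀ ginf g' : 𝒳 → ℝ)
    (hμ₀ : Measurable μ₀) (hμinf : Measurable μinf) (hμ' : Measurable μ')
    (hg₀ : Measurable g₀) (hginf : Measurable ginf) (hg' : Measurable g')
    (hμ₀2 : MemLp μ₀ 2 P) (hμinf2 : MemLp μinf 2 P) (hμ'2 : MemLp μ' 2 P)
    (hg₀2 : MemLp g₀ 2 P) (hginf2 : MemLp ginf 2 P) (hg'2 : MemLp g' 2 P)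
    (S₁ S₂ S₃ : Set 𝒳) (hS₁ : MeasurableSet S₁) (hS₂ : MeasurableSet S₂)
    (hS₃ : MeasurableSet S₃) (hcover : P (S₁ ∪ S₂ ∪ S₃) = 1)
    (h₁ : ∀ x ∈ S₁, μinf x = μ₀ x) (h₂ : ∀ x ∈ S₂, ginf x = g₀ x)
    (h₃ : ∀ x ∈ S₃, μinf x = μ₀ x ∧ ginf x = g₀ x) :
    ∫ x, |μ' x - μ₀ x| * |g' x - g₀ x| ∂P
      ≤ Real.sqrt (∫ x, (μ' x - μinf x) ^ 2 ∂P) * Real.sqrt (∫ x, (g' x - g₀ x) ^ 2 ∂P)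
        + Real.sqrt (∫ x, (μ' x - μ₀ x) ^ 2 ∂P) * Real.sqrt (∫ x, (g' x - ginf x) ^ 2 ∂P)
        + Real.sqrt (∫ x, (μ' x - μinf x) ^ 2 ∂P)
            * Real.sqrt (∫ x, (g' x - ginf x) ^ 2 ∂P) := by
  -- square integrable differences
  have hA : MemLp (fun x => μ' x - μinf x) 2 P := hμ'2.sub hμinf2
  have hB : MemLp (fun x => g' x - g₀ x) 2 P := hg'2.sub hg₀2
  have hC : MemLp (fun x => μ' x - μ₀ x) 2 P := hμ'2.sub hμ₀2
  have hD : MemLp (fun x => g' x - ginf x) 2 P := hg'2.sub hginf2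
  have hmA : Measurable (fun x => μ' x - μinf x) := hμ'.sub hμinf
  have hmB : Measurable (fun x => g' x - g₀ x) := hg'.sub hg₀
  have hmC : Measurable (fun x => μ' x - μ₀ x) := hμ'.sub hμ₀
  have hmD : Measurable (fun x => g' x - ginf x) := hg'.sub hginf
  have i1 : Integrable (fun x => |μ' x - μinf x| * |g' x - g₀ x|) P :=
    abs_mul_integrable_aux P hmA hmB hA hB
  have i2 : Integrable (fun x => |μ' x - μ₀ x| * |g' x - ginf x|) P :=
    abs_mul_integrable_aux P hmC hmD hC hD
  have i3 : Integrable (fun x => |μ' x - μinf x| * |g' x - ginf x|) P :=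
    abs_mul_integrable_aux P hmA hmD hA hD
  have i0 : Integrable (fun x => |μ' x - μ₀ x| * |g' x - g₀ x|) P :=
    abs_mul_integrable_aux P hmC hmB hC hB
  -- a.e. membership in the cover
  have hmem : ∀ᵐ x ∂P, x ∈ S₁ ∪ S₂ ∪ S₃ := by
    rw [MeasureTheory.ae_iff]
    have : {x | ¬ x ∈ S₁ ∪ S₂ ∪ S₃} = (S₁ ∪ S₂ ∪ S₃)ᶜ := rfl
    rw [this, measure_compl ((hS₁.union hS₂).union hS₃) (measure_ne_top P _), hcover,
      measure_univ, tsub_self]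
  -- pointwise bound a.e.
  have hpt : ∀ᵐ x ∂P, |μ' x - μ₀ x| * |g' x - g₀ x|
      ≤ |μ' x - μinf x| * |g' x - g₀ x| + |μ' x - μ₀ x| * |g' x - ginf x|
        + |μ' x - μinf x| * |g' x - ginf x| := by
    filter_upwards [hmem] with x hx
    rcases hx with (hx | hx) | hx
    · have h := h₁ x hx
      have : |μ' x - μ₀ x| * |g' x - g₀ x| = |μ' x - μinf x| * |g' x - g₀ x| := by rw [h]
      rw [this]
      nlinarith [mul_nonneg (abs_nonneg (μ' x - μ₀ x)) (abs_nonneg (g' x - ginf x)),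
        mul_nonneg (abs_nonneg (μ' x - μinf x)) (abs_nonneg (g' x - ginf x))]
    · have h := h₂ x hx
      have : |μ' x - μ₀ x| * |g' x - g₀ x| = |μ' x - μ₀ x| * |g' x - ginf x| := by rw [h]
      rw [this]
      nlinarith [mul_nonneg (abs_nonneg (μ' x - μinf x)) (abs_nonneg (g' x - g₀ x)),
        mul_nonneg (abs_nonneg (μ' x - μinf x)) (abs_nonneg (g' x - ginf x))]
    · obtain ⟨hμ, hg⟩ := h₃ x hx
      have : |μ' x - μ₀ x| * |g' x - g₀ x| = |μ' x - μinf x| * |g' x - ginf x| := by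
        rw [hμ, hg]
      rw [this]
      nlinarith [mul_nonneg (abs_nonneg (μ' x - μinf x)) (abs_nonneg (g' x - g₀ x)),
        mul_nonneg (abs_nonneg (μ' x - μ₀ x)) (abs_nonneg (g' x - ginf x))]
  calc ∫ x, |μ' x - μ₀ x| * |g' x - g₀ x| ∂P
      ≤ ∫ x, (|μ' x - μinf x| * |g' x - g₀ x| + |μ' x - μ₀ x| * |g' x - ginf x|
          + |μ' x - μinf x| * |g' x - ginf x|) ∂P :=
        integral_mono_ae i0 ((i1.add i2).add i3) hpt
    _ = (∫ x, |μ' x - μinf x| * |g' x - g₀ x| ∂P)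
          + (∫ x, |μ' x - μ₀ x| * |g' x - ginf x| ∂P)
          + (∫ x, |μ' x - μinf x| * |g' x - ginf x| ∂P) := by
        have i12 : Integrable (fun x => |μ' x - μinf x| * |g' x - g₀ x|
            + |μ' x - μ₀ x| * |g' x - ginf x|) P := i1.add i2
        rw [integral_add i12 i3, integral_add i1 i2]
    _ ≤ _ := by
        gcongr
        · exact cauchy_schwarz_aux P hA hB
        · exact cauchy_schwarz_aux P hC hD
        · exact cauchy_schwarz_aux P hA hD
end
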